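/- arXiv:1111.3824 — 9 statements merged into one kernel-verified Lean document; each statement's English description precedes it below -/
import Mathlib

section
/- For every integer n ≥ 2 and every sequence of N = C(2n−4, n−2) + 1 points p₁, …, p_N in ℝ², p_i = (x_i, y_i) with x₁ < x₂ < ⋯ < x_N, there exist indices i₁ < i₂ < ⋯ < i_n such that the slopes (y_{i_{j+1}} − y_{i_j})/(x_{i_{j+1}} − x_{i_j}), for j = 1, …, n−1, form a nondecreasing sequence or a nonincreasing sequence. -/
namespace ESaux

variable {α : Type*}

def Trip (ρ : α → α → α → Prop) : List α → Prop
  | a :: b :: c :: t => ρ a b c ∧ Trip ρ (b :: c :: t)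
  | _ => True

@[simp] theorem trip_nil (ρ : α → α → α → Prop) : Trip ρ [] := trivial
@[simp] theorem trip_single (ρ : α → α → α → Prop) (a : α) : Trip ρ [a] := trivial
@[simp] theorem trip_pair (ρ : α → α → α → Prop) (a b : α) : Trip ρ [a, b] := trivial
@[simp] theorem trip_cons (ρ : α → α → α → Prop) (a b c : α) (t : List α) :
    Trip ρ (a :: b :: c :: t) ↔ ρ a b c ∧ Trip ρ (b :: c :: t) := Iff.rfl

theorem trip_get (ρ : α → α → α → Prop) :
    ∀ (l : List α), Trip ρ l → ∀ (i : ℕ) (h : i + 2 < l.length),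
      ρ (l[i]'(by omega)) (l[i+1]'(by omega)) (l[i+2]'h)
  | a :: b :: c :: t, ⟨h0, ht⟩, 0, h => by simpa using h0
  | a :: b :: c :: t, ⟨h0, ht⟩, (i+1), h => by
      exact trip_get ρ (b :: c :: t) ht i (by simpa using h)

variable [LinearOrder α] (σ : α → α → ℝ)

/-- A "reversed cup": list in decreasing order, slopes nondecreasing left-to-right in
the original (increasing) order. -/
def RCup (l : List α) : Prop :=
  l.Chain' (· > ·) ∧ Trip (fun z y x => σ x y ≤ σ y z) l

/-- A cap: list in increasing order, slopes nonincreasing. -/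
def Cap (l : List α) : Prop :=
  l.Chain' (· < ·) ∧ Trip (fun a b c => σ b c ≤ σ a b) l

theorem cupcap : ∀ (k a b : ℕ), a + b ≤ k → 2 ≤ a → 2 ≤ b → ∀ S : Finset α,
    (a + b - 4).choose (a - 2) + 1 ≤ S.card →
    (∃ l : List α, l.length = a ∧ (∀ p ∈ l, p ∈ S) ∧ RCup σ l) ∨
    (∃ l : List α, l.length = b ∧ (∀ p ∈ l, p ∈ S) ∧ Cap σ l) := by
  intro k
  induction k with
  | zero => intro a b hk ha hb; omega
  | succ k IH =>
    intro a b hk ha hb S hS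
    classical
    -- two distinct elements of S
    have hcard2 : 2 ≤ S.card := by
      have : 1 ≤ (a + b - 4).choose (a - 2) := Nat.succ_le_of_lt (Nat.choose_pos (by omega))
      omega
    obtain ⟨s, hs, t, ht, hst⟩ := Finset.one_lt_card.mp (show 1 < S.card by omega)
    rcases eq_or_lt_of_le ha with ha2 | ha3
    · -- a = 2 : a two-element reversed cup
      left
      rcases lt_or_gt_of_ne hst with h | h
      · exact ⟨[t, s], by simp [← ha2], by simp [hs, ht], by simp [RCup, h, List.Chain', List.isChain_pair], by simp [RCup]⟩
      · exact ⟨[s, t], by simp [← ha2], by simp [hs, ht], by simp [RCup, h, List.Chain', List.isChain_pair], by simp [RCup]⟩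
    rcases eq_or_lt_of_le hb with hb2 | hb3
    · -- b = 2 : a two-element cap
      right
      rcases lt_or_gt_of_ne hst with h | h
      · exact ⟨[s, t], by simp [← hb2], by simp [hs, ht], by simp [Cap, h, List.Chain', List.isChain_pair], by simp [Cap]⟩
      · exact ⟨[t, s], by simp [← hb2], by simp [hs, ht], by simp [Cap, h, List.Chain', List.isChain_pair], by simp [Cap]⟩
    -- now a, b ≥ 3
    have ha3 : 3 ≤ a := ha3
    have hb3 : 3 ≤ b := hb3
    -- set of endpoints (maxima) of (a-1)-cups inside S
    set P : α → Prop := fun p => ∃ l : List α, l.length = a - 1 ∧ (∀ q ∈ l, q ∈ S) ∧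
      RCup σ l ∧ l.head? = some p with hP
    set L : Finset α := S.filter P with hL
    have hPascal : (a + b - 4).choose (a - 2)
        = (a - 1 + b - 4).choose (a - 1 - 2) + (a + (b - 1) - 4).choose (a - 2) := by
      rw [show a + b - 4 = (a + b - 5) + 1 by omega, show a - 2 = (a - 3) + 1 by omega,
        Nat.choose_succ_succ, show a - 1 + b - 4 = a + b - 5 by omega,
        show a - 1 - 2 = a - 3 by omega, show a + (b - 1) - 4 = a + b - 5 by omega]
    by_cases hbig : (a - 1 + b - 4).choose (a - 1 - 2) + 1 ≤ (S \ L).card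
    · rcases IH (a - 1) b (by omega) (by omega) hb (S \ L) hbig with ⟨l, hlen, hmem, hcup⟩ | ⟨l, hlen, hmem, hcap⟩
      · -- an (a-1)-cup in S \ L : its head should be in L, contradiction
        exfalso
        obtain ⟨p, rest, rfl⟩ : ∃ p rest, l = p :: rest := by
          cases l with
          | nil => simp at hlen; omega
          | cons p rest => exact ⟨p, rest, rfl⟩
        have hpS : p ∈ S \ L := hmem p (by simp)
        have hpL : p ∈ L := by
          rw [hL, Finset.mem_filter]
          exact ⟨(Finset.mem_sdiff.mp hpS).1,
            ⟨p :: rest, hlen, fun q hq => (Finset.mem_sdiff.mp (hmem q hq)).1, hcup, rfl⟩⟩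
        exact (Finset.mem_sdiff.mp hpS).2 hpL
      · exact Or.inr ⟨l, hlen, fun q hq => (Finset.mem_sdiff.mp (hmem q hq)).1, hcap⟩
    · -- L is big
      have hLsub : L ⊆ S := Finset.filter_subset _ _
      have hLcard : (a + (b - 1) - 4).choose (a - 2) + 1 ≤ L.card := by
        have := Finset.card_sdiff_add_card_eq_card hLsub
        omega
      rcases IH a (b - 1) (by omega) ha (by omega) L hLcard with ⟨l, hlen, hmem, hcup⟩ | ⟨l, hlen, hmem, hcap⟩
      · exact Or.inl ⟨l, hlen, fun q hq => hLsub (hmem q hq), hcup⟩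
      · -- a (b-1)-cap in L; extend
        obtain ⟨c₁, c₂, crest, rfl⟩ : ∃ c₁ c₂ crest, l = c₁ :: c₂ :: crest := by
          match l with
          | [] => simp at hlen; omega
          | [c] => simp at hlen; omega
          | c₁ :: c₂ :: crest => exact ⟨c₁, c₂, crest, rfl⟩
        have hc₁L : c₁ ∈ L := hmem c₁ (by simp)
        obtain ⟨hc₁S, u, hulen, humem, hucup, huhead⟩ := Finset.mem_filter.mp hc₁L
        obtain ⟨p, urest, rfl⟩ : ∃ p urest, u = c₁ :: p :: urest := by
          match u with
          | [] => simp at hulen; omega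
          | [c] => simp at hulen; omega
          | c :: p :: urest =>
            simp only [List.head?_cons, Option.some.injEq] at huhead
            exact ⟨p, urest, by rw [huhead]⟩
        have hc12 : c₁ < c₂ := (List.isChain_cons_cons.mp hcap.1).1
        have hpc1 : c₁ > p := (List.isChain_cons_cons.mp hucup.1).1
        by_cases hslope : σ p c₁ ≤ σ c₁ c₂
        · -- extend the cup with c₂
          left
          refine ⟨c₂ :: c₁ :: p :: urest, by simp at hulen ⊢; omega, ?_, ?_, ?_⟩
          · intro q hq
            rcases List.mem_cons.mp hq with rfl | hq
            · exact hLsub (hmem q (by simp))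
            · exact humem q hq
          · exact List.isChain_cons_cons.mpr ⟨hc12, hucup.1⟩
          · exact (trip_cons _ _ _ _ _).mpr ⟨hslope, hucup.2⟩
        · -- extend the cap with p
          right
          refine ⟨p :: c₁ :: c₂ :: crest, by simp at hlen ⊢; omega, ?_, ?_, ?_⟩
          · intro q hq
            rcases List.mem_cons.mp hq with rfl | hq
            · exact humem q (by simp)
            · exact hLsub (hmem q hq)
          · exact List.isChain_cons_cons.mpr ⟨hpc1, hcap.1⟩
          · exact (trip_cons _ _ _ _ _).mpr ⟨le_of_lt (not_le.mp hslope), hcap.2⟩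

end ESaux


/-- **Erdős–Szekeres theorem on convex/concave configurations.**
For every `n ≥ 2` and every sequence of `N = C(2n-4, n-2) + 1` points in the plane,
given by `pᵢ = (x i, y i)` with strictly increasing `x`-coordinates, there exist
indices `i₁ < ⋯ < iₙ` such that the slopes of consecutive segments form a
nondecreasing or a nonincreasing sequence. -/
theorem stmt1 (n : ℕ) (hn : 2 ≤ n)
    (x y : Fin (Nat.choose (2 * n - 4) (n - 2) + 1) → ℝ) (hx : StrictMono x) :
    ∃ ι : Fin n → Fin (Nat.choose (2 * n - 4) (n - 2) + 1), StrictMono ι ∧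
      ((∀ (j : ℕ) (h : j + 2 < n),
          (y (ι ⟨j + 1, by omega⟩) - y (ι ⟨j, by omega⟩)) /
              (x (ι ⟨j + 1, by omega⟩) - x (ι ⟨j, by omega⟩)) ≤
            (y (ι ⟨j + 2, h⟩) - y (ι ⟨j + 1, by omega⟩)) /
              (x (ι ⟨j + 2, h⟩) - x (ι ⟨j + 1, by omega⟩))) ∨
       (∀ (j : ℕ) (h : j + 2 < n),
          (y (ι ⟨j + 2, h⟩) - y (ι ⟨j + 1, by omega⟩)) /
              (x (ι ⟨j + 2, h⟩) - x (ι ⟨j + 1, by omega⟩)) ≤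
            (y (ι ⟨j + 1, by omega⟩) - y (ι ⟨j, by omega⟩)) /
              (x (ι ⟨j + 1, by omega⟩) - x (ι ⟨j, by omega⟩)))) := by
  classical
  have hS : (n + n - 4).choose (n - 2) + 1 ≤
      (Finset.univ : Finset (Fin (Nat.choose (2 * n - 4) (n - 2) + 1))).card := by
    rw [Finset.card_univ, Fintype.card_fin, show n + n - 4 = 2 * n - 4 by omega]
  rcases ESaux.cupcap (fun i j => (y j - y i) / (x j - x i)) (n + n) n n le_rfl hn hn
      Finset.univ hS with
    ⟨l, hlen, -, hchain, htrip⟩ | ⟨l, hlen, -, hchain, htrip⟩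
  · -- reversed cup, reverse the indexing
    refine ⟨fun k => l[n - 1 - (k : ℕ)]'(by omega), ?_, Or.inl ?_⟩
    · intro k k' hkk'
      have hpw := List.pairwise_iff_get.mp ((List.isChain_iff_pairwise).mp hchain)
        ⟨n - 1 - (k' : ℕ), by omega⟩ ⟨n - 1 - (k : ℕ), by omega⟩
        (by simp only [Fin.mk_lt_mk]; omega)
      simpa [List.get_eq_getElem] using hpw
    · intro j h
      have key := ESaux.trip_get _ l htrip (n - 3 - j) (by omega)
      simp only [show n - 3 - j = n - 1 - (j + 2) from by omega,
        show n - 1 - (j + 2) + 1 = n - 1 - (j + 1) from by omega,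
        show n - 1 - (j + 2) + 2 = n - 1 - j from by omega] at key
      exact key
  · -- cap
    refine ⟨fun k => l[(k : ℕ)]'(by omega), ?_, Or.inr ?_⟩
    · intro k k' hkk'
      have hpw := List.pairwise_iff_get.mp ((List.isChain_iff_pairwise).mp hchain)
        ⟨(k : ℕ), by omega⟩ ⟨(k' : ℕ), by omega⟩ (by simpa using hkk')
      simpa [List.get_eq_getElem] using hpw
    · intro j h
      exact ESaux.trip_get _ l htrip j (by omega)
end

section
/- For all integers k ≥ 1 and n ≥ 1 there exists N such that every set of N points in the plane in k-general position contains an n-point kth-order monotone subset. -/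
/-- The `m`-th divided difference `Δ_m(p₁, …, p_{m+1})` of a tuple of points in the plane. -/
noncomputable def divdiff : (m : ℕ) → (Fin (m + 1) → ℝ × ℝ) → ℝ
  | 0, p => (p 0).2
  | m + 1, p =>
      (divdiff m (fun i => p i.succ) - divdiff m (fun i => p i.castSucc)) /
        ((p (Fin.last (m + 1))).1 - (p 0).1)

/-- A finite planar point set is in `k`-general position if its points have pairwise distinct
`x`-coordinates and no `k+1` of its points lie on the graph of a polynomial of degree
at most `k-1`. -/
def KGenPos (k : ℕ) (P : Finset (ℝ × ℝ)) : Prop :=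
  (∀ p ∈ P, ∀ q ∈ P, p.1 = q.1 → p = q) ∧
  ∀ g : Polynomial ℝ, g.degree < (k : WithBot ℕ) →
    ∀ T ⊆ P, (∀ p ∈ T, Polynomial.eval p.1 g = p.2) → T.card ≤ k

/-- A planar point set `S` is `k`-th order monotone if the `k`-th divided difference of every
`(k+1)`-tuple of its points (listed in increasing order of `x`-coordinates) is nonnegative,
or every such divided difference is nonpositive. -/
def KOrderMonotone (k : ℕ) (S : Finset (ℝ × ℝ)) : Prop :=
  (∀ q : Fin (k + 1) → ℝ × ℝ, (∀ i, q i ∈ S) →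
      StrictMono (fun i => (q i).1) → 0 ≤ divdiff k q) ∨
  (∀ q : Fin (k + 1) → ℝ × ℝ, (∀ i, q i ∈ S) →
      StrictMono (fun i => (q i).1) → divdiff k q ≤ 0)


open Finset in
/-- Two-color hypergraph Ramsey theorem. -/
theorem myRamsey : ∀ r n : ℕ, ∃ N : ℕ, ∀ (α : Type) [LinearOrder α] (V : Finset α)
    (c : Finset α → Bool), N ≤ V.card →
      ∃ S ⊆ V, S.card = n ∧ ∃ b, ∀ T ⊆ S, T.card = r → c T = b := by
  intro r
  induction r with
  | zero =>
    intro n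
    refine ⟨n, fun α _ V c hV => ?_⟩
    obtain ⟨S, hS, hcard⟩ := Finset.exists_subset_card_eq hV
    exact ⟨S, hS, hcard, c ∅, fun T _ hT => by rw [Finset.card_eq_zero.mp hT]⟩
  | succ r IH =>
    choose Nf hNf using IH
    have inner : ∀ L : ℕ, ∃ M : ℕ, ∀ (α : Type) [LinearOrder α] (V : Finset α)
        (c : Finset α → Bool), M ≤ V.card →
          ∃ (S : Finset α) (bf : α → Bool), S ⊆ V ∧ S.card = L ∧
            ∀ T ⊆ S, T.card = r + 1 → ∀ v ∈ T, (∀ u ∈ T, v ≤ u) → c T = bf v := by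
      intro L
      induction L with
      | zero =>
        refine ⟨0, fun α _ V c _ => ⟨∅, fun _ => true, Finset.empty_subset V, rfl,
          fun T hT hcard v hv _ => ?_⟩⟩
        rw [Finset.subset_empty.mp hT] at hv
        exact absurd hv (Finset.notMem_empty v)
      | succ L IHL =>
        obtain ⟨M, hM⟩ := IHL
        refine ⟨Nf M + 1, fun α _ V c hV => ?_⟩
        have hVne : V.Nonempty := Finset.card_pos.mp (by omega)
        set v := V.min' hVne with hv
        have hvV : v ∈ V := V.min'_mem hVne
        have hV' : Nf M ≤ (V.erase v).card := by
          rw [Finset.card_erase_of_mem hvV]; omega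
        obtain ⟨S', hS'sub, hS'card, b, hb⟩ :=
          hNf M α (V.erase v) (fun T => c (insert v T)) hV'
        obtain ⟨S, bf, hSsub, hScard, hS⟩ := hM α S' c (le_of_eq hS'card.symm)
        have hvS : v ∉ S := fun h => (Finset.mem_erase.mp (hS'sub (hSsub h))).1 rfl
        refine ⟨insert v S, fun u => if u = v then b else bf u,
          Finset.insert_subset hvV (hSsub.trans (hS'sub.trans (Finset.erase_subset _ _))),
          by rw [Finset.card_insert_of_notMem hvS, hScard], ?_⟩
        intro T hT hTcard w hwT hwmin
        by_cases hvT : v ∈ T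
        · have hwv : w = v := le_antisymm
            (hwmin v hvT)
            (V.min'_le w (Finset.insert_subset hvV
              (hSsub.trans (hS'sub.trans (Finset.erase_subset _ _))) (hT hwT)))
          have hTe : T.erase v ⊆ S' := by
            intro u hu
            have hu' := Finset.mem_erase.mp hu
            have := hT hu'.2
            rcases Finset.mem_insert.mp this with h | h
            · exact absurd h hu'.1
            · exact hSsub h
          have hTecard : (T.erase v).card = r := by
            rw [Finset.card_erase_of_mem hvT, hTcard]; omega
          have := hb (T.erase v) hTe hTecard
          rw [Finset.insert_erase hvT] at this
          rw [this, hwv]; simp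
        · have hTS : T ⊆ S := fun u hu => by
            rcases Finset.mem_insert.mp (hT hu) with h | h
            · exact absurd (h ▸ hu) hvT
            · exact h
          have hwv : w ≠ v := fun h => hvT (h ▸ hwT)
          rw [hS T hTS hTcard w hwT hwmin]; simp [hwv]
    intro n
    obtain ⟨M, hM⟩ := inner (2 * n)
    refine ⟨M, fun α _ V c hV => ?_⟩
    obtain ⟨S, bf, hSsub, hScard, hS⟩ := hM α V c hV
    have hsplit : (S.filter (fun u => bf u = true)).card +
        (S.filter (fun u => ¬ bf u = true)).card = 2 * n :=
      by rw [Finset.card_filter_add_card_filter_not, hScard]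
    have : n ≤ (S.filter (fun u => bf u = true)).card ∨
        n ≤ (S.filter (fun u => ¬ bf u = true)).card := by omega
    rcases this with h | h
    · obtain ⟨S₁, hS₁, hS₁card⟩ := Finset.exists_subset_card_eq h
      refine ⟨S₁, (hS₁.trans (Finset.filter_subset _ _)).trans hSsub, hS₁card, true, ?_⟩
      intro T hT hTcard
      have hTne : T.Nonempty := Finset.card_pos.mp (by omega)
      have hw : T.min' hTne ∈ T := T.min'_mem hTne
      have := hS T (hT.trans (hS₁.trans (Finset.filter_subset _ _))) hTcard
        (T.min' hTne) hw (fun u hu => T.min'_le u hu)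
      rw [this]
      exact (Finset.mem_filter.mp (hS₁ (hT hw))).2
    · obtain ⟨S₁, hS₁, hS₁card⟩ := Finset.exists_subset_card_eq h
      refine ⟨S₁, (hS₁.trans (Finset.filter_subset _ _)).trans hSsub, hS₁card, false, ?_⟩
      intro T hT hTcard
      have hTne : T.Nonempty := Finset.card_pos.mp (by omega)
      have hw : T.min' hTne ∈ T := T.min'_mem hTne
      have := hS T (hT.trans (hS₁.trans (Finset.filter_subset _ _))) hTcard
        (T.min' hTne) hw (fun u hu => T.min'_le u hu)
      rw [this]
      have := (Finset.mem_filter.mp (hS₁ (hT hw))).2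
      simpa using this

/-- **Ramsey-type theorem for `k`-th order monotone subsets** (Proposition 1.3):
for all `k ≥ 1` and `n ≥ 1` there exists `N` such that every `N`-point planar set in
`k`-general position contains an `n`-point `k`-th order monotone subset. -/
theorem stmt2 (k n : ℕ) (hk : 1 ≤ k) (hn : 1 ≤ n) :
    ∃ N : ℕ, ∀ P : Finset (ℝ × ℝ), P.card = N → KGenPos k P →
      ∃ S ⊆ P, S.card = n ∧ KOrderMonotone k S := by
  obtain ⟨N, hN⟩ := myRamsey (k + 1) n
  refine ⟨N, fun P hPcard hPgen => ?_⟩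
  classical
  set c : Finset (ℝ ×ₗ ℝ) → Bool := fun T =>
    if h : T.card = k + 1 then
      decide (0 ≤ divdiff k (fun i => ofLex (T.orderEmbOfFin h i))) else true with hc
  set V : Finset (ℝ ×ₗ ℝ) := P.image toLex with hV
  have hVcard : N ≤ V.card := by
    rw [hV, Finset.card_image_of_injective _ toLex.injective, hPcard]
  obtain ⟨S, hSV, hScard, b, hb⟩ := hN (ℝ ×ₗ ℝ) V c hVcard
  refine ⟨S.image ofLex, ?_, ?_, ?_⟩
  · intro u hu
    obtain ⟨a, ha, rfl⟩ := Finset.mem_image.mp hu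
    obtain ⟨p, hp, rfl⟩ := Finset.mem_image.mp (hSV ha)
    simpa using hp
  · rw [Finset.card_image_of_injective _ ofLex.injective, hScard]
  have key : ∀ q : Fin (k + 1) → ℝ × ℝ, (∀ i, q i ∈ S.image ofLex) →
      StrictMono (fun i => (q i).1) → decide (0 ≤ divdiff k q) = b := by
    intro q hqS hq
    set q' : Fin (k + 1) → ℝ ×ₗ ℝ := fun i => toLex (q i) with hq'
    have hq'S : ∀ i, q' i ∈ S := by
      intro i
      obtain ⟨a, ha, hae⟩ := Finset.mem_image.mp (hqS i)
      have h2 : a = toLex (q i) := by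
        apply ofLex.injective; simpa using hae
      simpa [h2] using ha
    have hq'inj : Function.Injective q' := fun i j h =>
      hq.injective (congrArg (fun z => (ofLex z).1) h)
    set T := Finset.image q' Finset.univ with hT
    have hTS : T ⊆ S := by
      intro u hu
      obtain ⟨i, _, rfl⟩ := Finset.mem_image.mp hu
      exact hq'S i
    have hTcard : T.card = k + 1 := by
      rw [hT, Finset.card_image_of_injective _ hq'inj, Finset.card_univ, Fintype.card_fin]
    have hmono : StrictMono q' := by
      intro i j hij
      show toLex (q i) < toLex (q j)
      rw [Prod.Lex.lt_iff]
      exact Or.inl (hq hij)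
    have hqmem : ∀ i, q' i ∈ T := fun i => Finset.mem_image_of_mem q' (Finset.mem_univ i)
    have hequ : q' = fun i => T.orderEmbOfFin hTcard i := by
      rw [Finset.orderEmbOfFin_unique hTcard hqmem hmono]
    have hcT : c T = decide (0 ≤ divdiff k (fun i => ofLex (T.orderEmbOfFin hTcard i))) := by
      rw [hc]; exact dif_pos hTcard
    have hqe : (fun i => ofLex (T.orderEmbOfFin hTcard i)) = q := by
      funext i
      have := congrFun hequ i
      simp only [hq'] at this
      rw [← this]
      simp
    rw [← hb T hTS hTcard, hcT, hqe]
  cases b with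
  | true =>
    left
    intro q hqS hq
    simpa using key q hqS hq
  | false =>
    right
    intro q hqS hq
    have := key q hqS hq
    simp only [decide_eq_false_iff_not, not_le] at this
    exact le_of_lt this
end

section
/- Let k ≥ 1 and let p₁, …, p_{k+1} be points in ℝ², p_i = (x_i, y_i) with x₁ < ⋯ < x_{k+1}. Then there exists a k-times differentiable function f : ℝ → ℝ with f^{(k)}(x) ≥ 0 for all x ∈ ℝ and f(x_i) = y_i for all i, if and only if Δ_k(p₁, …, p_{k+1}) ≥ 0; symmetrically, such an f with f^{(k)} ≤ 0 everywhere exists if and only if Δ_k(p₁, …, p_{k+1}) ≤ 0. Moreover, if the points are in k-general position then Δ_k(p₁, …, p_{k+1}) ≠ 0, so exactly one of the two alternatives holds. -/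
/-- Repeated Rolle: if `F 0` has `n+1` zeros at strictly increasing points and each `F (j+1)`
is the derivative of `F j`, then `F n` has a zero. -/
lemma rolle_chain : ∀ (n : ℕ) (F : ℕ → ℝ → ℝ),
    (∀ j < n, ∀ x : ℝ, HasDerivAt (F j) (F (j + 1) x) x) →
    ∀ (x : Fin (n + 1) → ℝ), StrictMono x → (∀ i, F 0 (x i) = 0) → ∃ ξ, F n ξ = 0 := by
  intro n
  induction n with
  | zero => intro F _ x _ hz; exact ⟨x 0, hz 0⟩
  | succ n ih =>
      intro F hF x hmono hz
      have hd : ∀ y : ℝ, HasDerivAt (F 0) (F 1 y) y := hF 0 (Nat.succ_pos n)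
      have key : ∀ i : Fin (n + 1), ∃ c ∈ Set.Ioo (x i.castSucc) (x i.succ), F 1 c = 0 := by
        intro i
        have hab : x i.castSucc < x i.succ := hmono Fin.castSucc_lt_succ
        refine exists_hasDerivAt_eq_zero hab ?_ ?_ (fun y _ => hd y)
        · exact fun y _ => ((hd y).continuousAt).continuousWithinAt
        · rw [hz i.castSucc, hz i.succ]
      choose ξ hξmem hξz using key
      have hξmono : StrictMono ξ := by
        refine Fin.strictMono_iff_lt_succ.mpr fun i => ?_
        calc ξ i.castSucc < x i.castSucc.succ := (hξmem i.castSucc).2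
          _ ≤ x i.succ.castSucc := le_of_eq (congrArg x (Fin.succ_castSucc i))
          _ < ξ i.succ := (hξmem i.succ).1
      exact ih (fun j => F (j + 1)) (fun j hj y => hF (j + 1) (Nat.succ_lt_succ hj) y)
        ξ hξmono hξz

/-- Neville recursion: there is an interpolating polynomial of degree ≤ m whose `m`-th
coefficient is the divided difference. -/
lemma exists_interp : ∀ (m : ℕ) (p : Fin (m + 1) → ℝ × ℝ),
    StrictMono (fun i => (p i).1) →
    ∃ P : Polynomial ℝ, P.degree ≤ (m : WithBot ℕ) ∧ P.coeff m = divdiff m p ∧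
      ∀ i, P.eval (p i).1 = (p i).2 := by
  intro m
  induction m with
  | zero =>
      intro p _
      refine ⟨Polynomial.C (p 0).2, Polynomial.degree_C_le, by simp [divdiff], fun i => ?_⟩
      have h0 : i = 0 := by
        have := i.isLt
        ext
        omega
      rw [h0]; simp
  | succ m ih =>
      intro p hx
      obtain ⟨P₁, hd₁, hc₁, he₁⟩ := ih (fun i => p i.castSucc)
        (fun a b h => hx (by exact Fin.castSucc_lt_castSucc_iff.mpr h))
      obtain ⟨P₂, hd₂, hc₂, he₂⟩ := ih (fun i => p i.succ)
        (fun a b h => hx (by exact Fin.succ_lt_succ_iff.mpr h))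
      have hab : (p 0).1 < (p (Fin.last (m + 1))).1 := hx (by simp [Fin.lt_def])
      have hba : (p (Fin.last (m + 1))).1 - (p 0).1 ≠ 0 := sub_ne_zero.mpr hab.ne'
      set P : Polynomial ℝ := Polynomial.C ((p (Fin.last (m + 1))).1 - (p 0).1)⁻¹ *
        (P₂ * (Polynomial.X - Polynomial.C (p 0).1) -
          P₁ * (Polynomial.X - Polynomial.C (p (Fin.last (m + 1))).1)) with hP
      have hdeg : P.degree ≤ ((m + 1 : ℕ) : WithBot ℕ) := by
        have h1 : (P₂ * (Polynomial.X - Polynomial.C (p 0).1)).degree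
            ≤ ((m + 1 : ℕ) : WithBot ℕ) := by
          refine le_trans (Polynomial.degree_mul_le _ _) ?_
          rw [Polynomial.degree_X_sub_C]
          calc P₂.degree + 1 ≤ (m : WithBot ℕ) + 1 := add_le_add hd₂ le_rfl
            _ = ((m + 1 : ℕ) : WithBot ℕ) := by push_cast; rfl
        have h2 : (P₁ * (Polynomial.X - Polynomial.C (p (Fin.last (m + 1))).1)).degree
            ≤ ((m + 1 : ℕ) : WithBot ℕ) := by
          refine le_trans (Polynomial.degree_mul_le _ _) ?_
          rw [Polynomial.degree_X_sub_C]
          calc P₁.degree + 1 ≤ (m : WithBot ℕ) + 1 := add_le_add hd₁ le_rfl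
            _ = ((m + 1 : ℕ) : WithBot ℕ) := by push_cast; rfl
        calc P.degree ≤ (Polynomial.C ((p (Fin.last (m + 1))).1 - (p 0).1)⁻¹).degree +
              (P₂ * (Polynomial.X - Polynomial.C (p 0).1) -
                P₁ * (Polynomial.X - Polynomial.C (p (Fin.last (m + 1))).1)).degree :=
              Polynomial.degree_mul_le _ _
          _ ≤ 0 + ((m + 1 : ℕ) : WithBot ℕ) :=
              add_le_add Polynomial.degree_C_le
                (le_trans (Polynomial.degree_sub_le _ _) (max_le h1 h2))
          _ = ((m + 1 : ℕ) : WithBot ℕ) := zero_add _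
      have hlt : (m : WithBot ℕ) < ((m + 1 : ℕ) : WithBot ℕ) := by
        exact_mod_cast Nat.lt_succ_self m
      have hz₂ : P₂.coeff (m + 1) = 0 :=
        Polynomial.coeff_eq_zero_of_degree_lt (lt_of_le_of_lt hd₂ hlt)
      have hz₁ : P₁.coeff (m + 1) = 0 :=
        Polynomial.coeff_eq_zero_of_degree_lt (lt_of_le_of_lt hd₁ hlt)
      have hcoeff : P.coeff (m + 1) = divdiff (m + 1) p := by
        rw [hP, Polynomial.coeff_C_mul, Polynomial.coeff_sub,
          Polynomial.coeff_mul_X_sub_C, Polynomial.coeff_mul_X_sub_C, hz₁, hz₂, hc₁, hc₂]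
        simp only [divdiff]
        rw [div_eq_inv_mul]
        ring
      refine ⟨P, hdeg, hcoeff, fun j => ?_⟩
      have heval : P.eval (p j).1 = ((p (Fin.last (m + 1))).1 - (p 0).1)⁻¹ *
          (P₂.eval (p j).1 * ((p j).1 - (p 0).1) -
            P₁.eval (p j).1 * ((p j).1 - (p (Fin.last (m + 1))).1)) := by
        simp [hP]
      by_cases hj0 : j = 0
      · subst hj0
        have h1 : P₁.eval (p (0 : Fin (m + 2))).1 = (p (0 : Fin (m + 2))).2 := by
          have := he₁ 0
          simpa using this
        rw [heval, h1, sub_self, mul_zero, zero_sub]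
        field_simp
        ring
      · by_cases hjl : j = Fin.last (m + 1)
        · subst hjl
          have h2 : P₂.eval (p (Fin.last (m + 1))).1 = (p (Fin.last (m + 1))).2 := by
            have := he₂ (Fin.last m)
            simpa [Fin.succ_last] using this
          rw [heval, h2, sub_self, mul_zero, sub_zero]
          field_simp
        · have h1 : P₁.eval (p j).1 = (p j).2 := by
            have := he₁ (j.castPred hjl)
            simpa [Fin.castSucc_castPred] using this
          have h2 : P₂.eval (p j).1 = (p j).2 := by
            have := he₂ (j.pred hj0)
            simpa [Fin.succ_pred] using this
          rw [heval, h1, h2]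
          field_simp
          ring

lemma iter_deriv_eq (P : Polynomial ℝ) (k : ℕ) (h : P.degree ≤ (k : WithBot ℕ)) :
    (⇑Polynomial.derivative)^[k] P = Polynomial.C ((k.factorial : ℝ) * P.coeff k) := by
  have hnd : P.natDegree ≤ k := Polynomial.natDegree_le_iff_degree_le.mpr h
  have h0 : ((⇑Polynomial.derivative)^[k] P).natDegree ≤ 0 :=
    le_trans (Polynomial.natDegree_iterate_derivative P k) (by omega)
  have := Polynomial.eq_C_of_natDegree_le_zero h0
  rw [this, Polynomial.coeff_iterate_derivative]
  simp [Nat.descFactorial_self, mul_comm]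

/-- **Characterization of positive/negative `(k+1)`-tuples** (Corollary 2.3):
for `x₁ < ⋯ < x_{k+1}`, the points lie on the graph of a `k`-times differentiable function
`f = F 0` (with successive derivatives `F 1, …, F k`) whose `k`-th derivative is everywhere
nonnegative iff `Δ_k(p₁, …, p_{k+1}) ≥ 0`; symmetrically for nonpositive `k`-th derivative and
`Δ_k ≤ 0`. Moreover, if the points are in `k`-general position (no `k+1` of them on the graph of
a polynomial of degree at most `k-1`) then `Δ_k(p₁, …, p_{k+1}) ≠ 0`, so exactly one of the
two alternatives holds. -/
theorem stmt5 (k : ℕ) (hk : 1 ≤ k) (p : Fin (k + 1) → ℝ × ℝ)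
    (hx : StrictMono fun i => (p i).1) :
    ((∃ F : ℕ → ℝ → ℝ, (∀ j < k, ∀ x : ℝ, HasDerivAt (F j) (F (j + 1) x) x) ∧
        (∀ x : ℝ, 0 ≤ F k x) ∧ (∀ i, F 0 (p i).1 = (p i).2)) ↔ 0 ≤ divdiff k p) ∧
    ((∃ F : ℕ → ℝ → ℝ, (∀ j < k, ∀ x : ℝ, HasDerivAt (F j) (F (j + 1) x) x) ∧
        (∀ x : ℝ, F k x ≤ 0) ∧ (∀ i, F 0 (p i).1 = (p i).2)) ↔ divdiff k p ≤ 0) ∧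
    ((∀ g : Polynomial ℝ, g.degree < (k : WithBot ℕ) →
        ∃ i, Polynomial.eval (p i).1 g ≠ (p i).2) → divdiff k p ≠ 0) := by
  obtain ⟨P, hdeg, hcoeff, heval⟩ := exists_interp k p hx
  have hiter := iter_deriv_eq P k hdeg
  have hfacpos : (0 : ℝ) < (k.factorial : ℝ) := by exact_mod_cast k.factorial_pos
  have fwd : ∀ F : ℕ → ℝ → ℝ, (∀ j < k, ∀ x : ℝ, HasDerivAt (F j) (F (j + 1) x) x) →
      (∀ i, F 0 (p i).1 = (p i).2) →
      ∃ ξ, F k ξ = (k.factorial : ℝ) * divdiff k p := by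
    intro F hF hFi
    set G : ℕ → ℝ → ℝ := fun j x => F j x - ((⇑Polynomial.derivative)^[j] P).eval x with hG
    have hGd : ∀ j < k, ∀ x : ℝ, HasDerivAt (G j) (G (j + 1) x) x := by
      intro j hj x
      have hp : HasDerivAt (fun y : ℝ => Polynomial.eval y ((⇑Polynomial.derivative)^[j] P))
          (Polynomial.eval x ((⇑Polynomial.derivative)^[j + 1] P)) x := by
        rw [Function.iterate_succ_apply']
        exact Polynomial.hasDerivAt _ x
      exact (hF j hj x).sub hp
    have hGz : ∀ i, G 0 ((fun i => (p i).1) i) = 0 := by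
      intro i
      simp [hG, hFi i, heval i]
    obtain ⟨ξ, hξ⟩ := rolle_chain k G hGd (fun i => (p i).1) hx hGz
    refine ⟨ξ, ?_⟩
    simp only [hG] at hξ
    have hF' : F k ξ = Polynomial.eval ξ ((⇑Polynomial.derivative)^[k] P) := by linarith
    rw [hF', hiter, hcoeff]
    simp
  have bwd : ∃ F : ℕ → ℝ → ℝ, (∀ j < k, ∀ x : ℝ, HasDerivAt (F j) (F (j + 1) x) x) ∧
      (∀ x : ℝ, F k x = (k.factorial : ℝ) * divdiff k p) ∧
      (∀ i, F 0 (p i).1 = (p i).2) := by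
    refine ⟨fun j x => Polynomial.eval x ((⇑Polynomial.derivative)^[j] P), ?_, ?_, ?_⟩
    · intro j hj x
      show HasDerivAt (fun y : ℝ => Polynomial.eval y ((⇑Polynomial.derivative)^[j] P))
          (Polynomial.eval x ((⇑Polynomial.derivative)^[j + 1] P)) x
      rw [Function.iterate_succ_apply']
      exact Polynomial.hasDerivAt _ x
    · intro x
      show Polynomial.eval x ((⇑Polynomial.derivative)^[k] P) = _
      rw [hiter, hcoeff]
      simp
    · intro i
      simpa using heval i
  have pos_iff : (∃ F : ℕ → ℝ → ℝ, (∀ j < k, ∀ x : ℝ, HasDerivAt (F j) (F (j + 1) x) x) ∧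
      (∀ x : ℝ, 0 ≤ F k x) ∧ (∀ i, F 0 (p i).1 = (p i).2)) ↔ 0 ≤ divdiff k p := by
    constructor
    · rintro ⟨F, hF, hFk, hFi⟩
      obtain ⟨ξ, hξ⟩ := fwd F hF hFi
      nlinarith [hFk ξ]
    · intro h
      obtain ⟨F, hF, hFk, hFi⟩ := bwd
      exact ⟨F, hF, fun x => by rw [hFk x]; positivity, hFi⟩
  have neg_iff : (∃ F : ℕ → ℝ → ℝ, (∀ j < k, ∀ x : ℝ, HasDerivAt (F j) (F (j + 1) x) x) ∧
      (∀ x : ℝ, F k x ≤ 0) ∧ (∀ i, F 0 (p i).1 = (p i).2)) ↔ divdiff k p ≤ 0 := by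
    constructor
    · rintro ⟨F, hF, hFk, hFi⟩
      obtain ⟨ξ, hξ⟩ := fwd F hF hFi
      nlinarith [hFk ξ]
    · intro h
      obtain ⟨F, hF, hFk, hFi⟩ := bwd
      refine ⟨F, hF, fun x => by rw [hFk x]; nlinarith, hFi⟩
  refine ⟨pos_iff, neg_iff, ?_⟩
  intro hg hzero
  have hdlt : P.degree < (k : WithBot ℕ) := by
    rw [Polynomial.degree_lt_iff_coeff_zero]
    intro m hm
    rcases eq_or_lt_of_le hm with h | h
    · rw [← h, hcoeff, hzero]
    · exact Polynomial.coeff_eq_zero_of_degree_lt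
        (lt_of_le_of_lt hdeg (by exact_mod_cast h))
  obtain ⟨i, hi⟩ := hg P hdlt
  exact hi (heval i)
end

section
/- Let k ≥ 1 and let K = {p₁, …, p_{k+1}} be points in ℝ² in k-general position, p_i = (x_i, y_i) with x₁ < ⋯ < x_{k+1}. Fix i ∈ {1, …, k+1} and let f_i be the unique polynomial of degree at most k−1 whose graph passes through the k points of K ∖ {p_i}. Then the sign of Δ_k(p₁, …, p_{k+1}) equals (−1)^{k−i} if y_i < f_i(x_i), and equals (−1)^{k+1−i} if y_i > f_i(x_i). -/
open Finset Polynomial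


/-- The weight `∏_{l ≠ i} (x_i - x_l)`, written as a product over all indices. -/
noncomputable def Wt (m : ℕ) (x : Fin (m + 1) → ℝ) (i : Fin (m + 1)) : ℝ :=
  ∏ l, if l = i then 1 else x i - x l

lemma Wt_eq_prod_erase (m : ℕ) (x : Fin (m + 1) → ℝ) (i : Fin (m + 1)) :
    Wt m x i = ∏ l ∈ univ.erase i, (x i - x l) := by
  rw [Wt, ← Finset.prod_erase (univ : Finset (Fin (m+1)))
    (f := fun l => if l = i then (1:ℝ) else x i - x l) (if_pos rfl)]
  exact Finset.prod_congr rfl fun l hl => if_neg (Finset.ne_of_mem_erase hl)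

lemma Wt_ne_zero (m : ℕ) (x : Fin (m + 1) → ℝ) (hx : Function.Injective x)
    (i : Fin (m + 1)) : Wt m x i ≠ 0 := by
  rw [Wt]
  refine Finset.prod_ne_zero_iff.mpr fun l _ => ?_
  by_cases h : l = i
  · simp [h]
  · simpa [h] using sub_ne_zero.mpr fun he => h (hx he).symm

lemma divdiff_zero (m : ℕ) (x : Fin (m + 1) → ℝ) :
    divdiff m (fun j => (x j, (0:ℝ))) = 0 := by
  induction m with
  | zero => rfl
  | succ m ih => simp [divdiff, ih (fun j => x j.succ), ih (fun j => x j.castSucc)]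

lemma divdiff_add (m : ℕ) (x y z : Fin (m + 1) → ℝ) :
    divdiff m (fun j => (x j, y j + z j)) =
      divdiff m (fun j => (x j, y j)) + divdiff m (fun j => (x j, z j)) := by
  induction m with
  | zero => rfl
  | succ m ih =>
      have h1 := ih (fun j => x j.succ) (fun j => y j.succ) (fun j => z j.succ)
      have h2 := ih (fun j => x j.castSucc) (fun j => y j.castSucc) (fun j => z j.castSucc)
      simp only [divdiff] at h1 h2 ⊢
      rw [h1, h2]
      ring

lemma divdiff_sum (m : ℕ) (x : Fin (m + 1) → ℝ) {α : Type*} (s : Finset α)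
    (y : α → Fin (m + 1) → ℝ) :
    divdiff m (fun j => (x j, ∑ a ∈ s, y a j)) =
      ∑ a ∈ s, divdiff m (fun j => (x j, y a j)) := by
  classical
  induction s using Finset.induction_on with
  | empty => simpa using divdiff_zero m x
  | insert _ _ hna ih =>
      rename_i a t
      rw [Finset.sum_insert hna]
      have : (fun j => (x j, ∑ b ∈ insert a t, y b j)) =
          fun j => (x j, y a j + ∑ b ∈ t, y b j) := by
        funext j; rw [Finset.sum_insert hna]
      rw [this, divdiff_add, ih]

lemma divdiff_delta : ∀ (m : ℕ) (x : Fin (m + 1) → ℝ), StrictMono x →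
    ∀ (i : Fin (m + 1)) (c : ℝ),
    divdiff m (fun j => (x j, if j = i then c else 0)) = c * (Wt m x i)⁻¹ := by
  intro m
  induction m with
  | zero =>
      intro x _ i c
      have : i = 0 := Fin.eq_zero i
      subst this
      simp [divdiff, Wt]
  | succ m ih =>
      intro x hx i c
      have hxs : StrictMono fun j : Fin (m + 1) => x j.succ :=
        fun a b h => hx (Fin.succ_lt_succ_iff.mpr h)
      have hxc : StrictMono fun j : Fin (m + 1) => x j.castSucc :=
        fun a b h => hx (Fin.castSucc_lt_castSucc_iff.mpr h)
      by_cases hi0 : i = 0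
      · subst hi0
        have e1 : (fun j : Fin (m + 1) => (x j.succ, if j.succ = (0 : Fin (m+2)) then c else 0)) =
            fun j => (x j.succ, (0:ℝ)) := by
          funext j; simp [Fin.succ_ne_zero]
        have e2 : (fun j : Fin (m + 1) =>
              (x j.castSucc, if j.castSucc = (0 : Fin (m+2)) then c else 0)) =
            fun j => (x j.castSucc, if j = 0 then c else 0) := by
          funext j; simp [Fin.castSucc_eq_zero_iff]
        have hW : Wt (m + 1) x 0 =
            Wt m (fun j => x j.castSucc) 0 * (x 0 - x (Fin.last (m + 1))) := by
          rw [Wt, Fin.prod_univ_castSucc]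
          simp [Wt, Fin.castSucc_eq_zero_iff, (Fin.last_pos (n := m + 1)).ne']
        simp only [divdiff]
        rw [show (fun j : Fin (m+1) => (fun l : Fin (m+2) => (x l, if l = 0 then c else 0)) j.succ)
              = fun j : Fin (m+1) => (x j.succ, if j.succ = (0 : Fin (m+2)) then c else 0) from rfl,
            show (fun j : Fin (m+1) => (fun l : Fin (m+2) => (x l, if l = 0 then c else 0)) j.castSucc)
              = fun j : Fin (m+1) => (x j.castSucc, if j.castSucc = (0 : Fin (m+2)) then c else 0) from rfl,
            e1, e2, divdiff_zero m (fun j => x j.succ), ih _ hxc 0 c, hW, mul_inv,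
            show x 0 - x (Fin.last (m+1)) = -(x (Fin.last (m+1)) - x 0) by ring, inv_neg]
        ring
      by_cases hil : i = Fin.last (m + 1)
      · subst hil
        have e1 : (fun j : Fin (m + 1) =>
              (x j.succ, if j.succ = Fin.last (m + 1) then c else 0)) =
            fun j => (x j.succ, if j = Fin.last m then c else 0) := by
          funext j; simp [Fin.succ_eq_last_succ]
        have e2 : (fun j : Fin (m + 1) =>
              (x j.castSucc, if j.castSucc = Fin.last (m + 1) then c else 0)) =
            fun j => (x j.castSucc, (0:ℝ)) := by
          funext j; simp [(Fin.castSucc_lt_last j).ne]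
        have hW : Wt (m + 1) x (Fin.last (m + 1)) =
            (x (Fin.last (m + 1)) - x 0) * Wt m (fun j => x j.succ) (Fin.last m) := by
          rw [Wt, Fin.prod_univ_succ]
          simp [Wt, Fin.succ_eq_last_succ, (Fin.last_pos (n := m + 1)).ne,
            (Fin.last_pos (n := m + 1)).ne', Fin.succ_last]
        simp only [divdiff]
        rw [show (fun j : Fin (m+1) =>
              (fun l : Fin (m+2) => (x l, if l = Fin.last (m+1) then c else 0)) j.succ)
              = fun j : Fin (m+1) =>
                (x j.succ, if j.succ = Fin.last (m+1) then c else 0) from rfl,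
            show (fun j : Fin (m+1) =>
              (fun l : Fin (m+2) => (x l, if l = Fin.last (m+1) then c else 0)) j.castSucc)
              = fun j : Fin (m+1) =>
                (x j.castSucc, if j.castSucc = Fin.last (m+1) then c else 0) from rfl,
            e1, e2, divdiff_zero m (fun j => x j.castSucc), ih _ hxs (Fin.last m) c, hW,
            mul_inv]
        ring
      · obtain ⟨i', rfl⟩ := Fin.eq_succ_of_ne_zero hi0
        obtain ⟨i'', hi2⟩ : ∃ y : Fin (m + 1), y.castSucc = i'.succ :=
          Fin.exists_castSucc_eq.mpr hil
        have e1 : (fun j : Fin (m + 1) => (x j.succ, if j.succ = i'.succ then c else 0)) =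
            fun j => (x j.succ, if j = i' then c else 0) := by
          funext j; simp [Fin.succ_inj]
        have e2 : (fun j : Fin (m + 1) =>
              (x j.castSucc, if j.castSucc = i'.succ then c else 0)) =
            fun j => (x j.castSucc, if j = i'' then c else 0) := by
          funext j; rw [← hi2]; simp [Fin.castSucc_inj]
        have hWa : Wt (m + 1) x i'.succ =
            (x i'.succ - x 0) * Wt m (fun j => x j.succ) i' := by
          rw [Wt, Fin.prod_univ_succ]
          simp [Wt, Fin.succ_inj, (Fin.succ_ne_zero i'), (Fin.succ_ne_zero i').symm]
        have hWb : Wt (m + 1) x i'.succ =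
            Wt m (fun j => x j.castSucc) i'' * (x i'.succ - x (Fin.last (m + 1))) := by
          rw [Wt, Fin.prod_univ_castSucc, ← hi2]
          simp [Wt, Fin.castSucc_inj, (Fin.castSucc_lt_last i'').ne, (Fin.castSucc_lt_last i'').ne']
        have ha : Wt m (fun j => x j.succ) i' ≠ 0 := Wt_ne_zero m _ hxs.injective i'
        have hb : Wt m (fun j => x j.castSucc) i'' ≠ 0 := Wt_ne_zero m _ hxc.injective i''
        have hu : x i'.succ - x 0 ≠ 0 := sub_ne_zero.mpr (hx.injective.ne hi0)
        have hv : x i'.succ - x (Fin.last (m + 1)) ≠ 0 :=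
          sub_ne_zero.mpr (hx.injective.ne hil)
        have hd : x (Fin.last (m + 1)) - x 0 ≠ 0 :=
          sub_ne_zero.mpr (hx.injective.ne (Fin.last_pos (n := m)).ne')
        have hainv : (Wt m (fun j => x j.succ) i')⁻¹ =
            (x i'.succ - x 0) * (Wt (m + 1) x i'.succ)⁻¹ := by
          rw [hWa, mul_inv]; field_simp
        have hbinv : (Wt m (fun j => x j.castSucc) i'')⁻¹ =
            (x i'.succ - x (Fin.last (m + 1))) * (Wt (m + 1) x i'.succ)⁻¹ := by
          rw [hWb, mul_inv]; field_simp
        simp only [divdiff]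
        rw [show (fun j : Fin (m+1) =>
              (fun l : Fin (m+2) => (x l, if l = i'.succ then c else 0)) j.succ)
              = fun j : Fin (m+1) => (x j.succ, if j.succ = i'.succ then c else 0) from rfl,
            show (fun j : Fin (m+1) =>
              (fun l : Fin (m+2) => (x l, if l = i'.succ then c else 0)) j.castSucc)
              = fun j : Fin (m+1) =>
                (x j.castSucc, if j.castSucc = i'.succ then c else 0) from rfl,
            e1, e2, ih _ hxs i' c, ih _ hxc i'' c, hainv, hbinv, div_eq_iff hd]
        ring

lemma coeff_basis (k : ℕ) (v : Fin (k + 1) → ℝ) (hv : Function.Injective v) (i : Fin (k + 1)) :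
    (Lagrange.basis univ v i).coeff k = (Wt k v i)⁻¹ := by
  have hinj : Set.InjOn v (univ : Finset (Fin (k + 1))) := hv.injOn
  have hdeg : (Lagrange.basis univ v i).natDegree = k := by
    rw [Lagrange.natDegree_basis hinj (mem_univ i)]
    simp
  have hlc : (Lagrange.basis univ v i).coeff k = (Lagrange.basis univ v i).leadingCoeff := by
    rw [Polynomial.leadingCoeff, hdeg]
  rw [hlc, Lagrange.basis, Polynomial.leadingCoeff_prod,
    Wt_eq_prod_erase, ← Finset.prod_inv_distrib]
  refine Finset.prod_congr rfl fun j hj => ?_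
  have hne : v i ≠ v j := hv.ne (Finset.ne_of_mem_erase hj).symm
  rw [Lagrange.basisDivisor, Polynomial.leadingCoeff_mul, Polynomial.leadingCoeff_C,
    Polynomial.leadingCoeff_X_sub_C, mul_one]

lemma sum_weights (k : ℕ) (v : Fin (k + 1) → ℝ) (hv : Function.Injective v)
    (f : Polynomial ℝ) (hdeg : f.degree < (k : WithBot ℕ)) :
    ∑ j, Polynomial.eval (v j) f * (Wt k v j)⁻¹ = 0 := by
  have hinj : Set.InjOn v (univ : Finset (Fin (k + 1))) := hv.injOn
  have hcard : f.degree < (#(univ : Finset (Fin (k + 1))) : WithBot ℕ) := by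
    refine lt_of_lt_of_le hdeg ?_
    simp [Fintype.card_fin]
    exact_mod_cast le_of_lt (Nat.lt_succ_self k)
  have h := Lagrange.eq_interpolate (v := v) (s := univ) hinj hcard
  have h2 := congrArg (fun q => Polynomial.coeff q k) h
  simp only [Lagrange.interpolate_apply, Polynomial.finset_sum_coeff,
    Polynomial.coeff_C_mul] at h2
  rw [Polynomial.coeff_eq_zero_of_degree_lt hdeg] at h2
  rw [← h2.symm]
  exact Finset.sum_congr rfl fun j _ => by rw [coeff_basis k v hv j]

lemma divdiff_graph (k : ℕ) (x : Fin (k + 1) → ℝ) (hx : StrictMono x)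
    (f : Polynomial ℝ) (hdeg : f.degree < (k : WithBot ℕ)) :
    divdiff k (fun j => (x j, Polynomial.eval (x j) f)) = 0 := by
  have e : (fun j => (x j, Polynomial.eval (x j) f)) =
      fun j => (x j, ∑ a : Fin (k + 1), if j = a then Polynomial.eval (x a) f else 0) := by
    funext j
    rw [Finset.sum_ite_eq univ j (fun a => Polynomial.eval (x a) f), if_pos (mem_univ j)]
  rw [e, divdiff_sum]
  have : ∀ a : Fin (k + 1), divdiff k (fun j => (x j, if j = a then Polynomial.eval (x a) f else 0))
      = Polynomial.eval (x a) f * (Wt k x a)⁻¹ := fun a => divdiff_delta k x hx a _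
  rw [Finset.sum_congr rfl fun a _ => this a]
  exact sum_weights k x hx.injective f hdeg

lemma sign_pow_mul (n : ℕ) (c : ℝ) (hc : 0 < c) :
    Real.sign ((-1 : ℝ) ^ n * c) = (-1 : ℝ) ^ n := by
  rcases Nat.even_or_odd n with h | h
  · rw [h.neg_one_pow, one_mul, Real.sign_of_pos hc]
  · rw [h.neg_one_pow, neg_one_mul, Real.sign_of_neg (by linarith), ]

lemma Wt_sign (k : ℕ) (x : Fin (k + 1) → ℝ) (hx : StrictMono x) (i : Fin (k + 1)) :
    ∃ b : ℝ, 0 < b ∧ Wt k x i = (-1 : ℝ) ^ (k - (i : ℕ)) * b := by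
  classical
  have hsplit := Finset.prod_filter_mul_prod_filter_not (univ : Finset (Fin (k + 1)))
    (fun l => l ≤ i) (fun l => if l = i then (1:ℝ) else x i - x l)
  have h1 : 0 < ∏ l ∈ univ.filter (fun l => l ≤ i), (if l = i then (1:ℝ) else x i - x l) := by
    refine Finset.prod_pos fun l hl => ?_
    rcases eq_or_lt_of_le (Finset.mem_filter.mp hl).2 with h | h
    · simp [h]
    · rw [if_neg h.ne]; exact sub_pos.mpr (hx h)
  have hcard : (univ.filter (fun l : Fin (k+1) => ¬ l ≤ i)).card = k - (i : ℕ) := by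
    have : univ.filter (fun l : Fin (k+1) => ¬ l ≤ i) = Finset.Ioi i := by
      ext l; simp [not_le]
    rw [this, Fin.card_Ioi]
    omega
  have h2 : ∏ l ∈ univ.filter (fun l => ¬ l ≤ i), (if l = i then (1:ℝ) else x i - x l)
      = (-1 : ℝ) ^ (k - (i : ℕ)) * ∏ l ∈ univ.filter (fun l => ¬ l ≤ i), (x l - x i) := by
    rw [← hcard, ← Finset.prod_const, ← Finset.prod_mul_distrib]
    refine Finset.prod_congr rfl fun l hl => ?_
    have h : i < l := not_le.mp (Finset.mem_filter.mp hl).2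
    rw [if_neg h.ne']; ring
  have h3 : 0 < ∏ l ∈ univ.filter (fun l => ¬ l ≤ i), (x l - x i) :=
    Finset.prod_pos fun l hl => sub_pos.mpr (hx (not_le.mp (Finset.mem_filter.mp hl).2))
  refine ⟨(∏ l ∈ univ.filter (fun l => l ≤ i), (if l = i then (1:ℝ) else x i - x l)) *
    (∏ l ∈ univ.filter (fun l => ¬ l ≤ i), (x l - x i)), mul_pos h1 h3, ?_⟩
  rw [Wt, ← hsplit, h2]
  ring

/-- **Sign criterion** (Lemma 2.4): let `K = {p₀, …, p_k}` (0-indexed; `k+1` points,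
`x₀ < ⋯ < x_k`) be in `k`-general position, fix an index `i`, and let `f` be the
polynomial of degree at most `k-1` through the `k` points of `K \ {pᵢ}`. Then
`sgn Δ_k(p₀, …, p_k) = (-1)^{k-(i+1)} = (-1)^{k+i+1}` if `pᵢ` lies below the graph of `f`,
and `sgn Δ_k(p₀, …, p_k) = (-1)^{k+1-(i+1)} = (-1)^{k+i}` if `pᵢ` lies above the graph.
(Here `i` is 0-indexed, whereas the paper uses 1-indexing; the exponents agree mod 2.) -/
theorem stmt6 (k : ℕ) (hk : 1 ≤ k) (p : Fin (k + 1) → ℝ × ℝ)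
    (hx : StrictMono fun i => (p i).1)
    (hgen : ∀ g : Polynomial ℝ, g.degree < (k : WithBot ℕ) →
      ∃ j, Polynomial.eval (p j).1 g ≠ (p j).2)
    (i : Fin (k + 1)) (f : Polynomial ℝ) (hdeg : f.degree < (k : WithBot ℕ))
    (hf : ∀ j, j ≠ i → Polynomial.eval (p j).1 f = (p j).2) :
    ((p i).2 < Polynomial.eval (p i).1 f →
      Real.sign (divdiff k p) = (-1 : ℝ) ^ (k + (i : ℕ) + 1)) ∧
    (Polynomial.eval (p i).1 f < (p i).2 →
      Real.sign (divdiff k p) = (-1 : ℝ) ^ (k + (i : ℕ))) := by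
  set d : ℝ := (p i).2 - Polynomial.eval (p i).1 f with hd_def
  have hsplit : divdiff k p = d * (Wt k (fun j => (p j).1) i)⁻¹ := by
    have e0 : p = fun j => ((p j).1,
        ((p j).2 - Polynomial.eval (p j).1 f) + Polynomial.eval (p j).1 f) := by
      funext j; rw [sub_add_cancel]
    have e1 : (fun j => ((p j).1, (p j).2 - Polynomial.eval (p j).1 f)) =
        fun j => ((p j).1, if j = i then d else 0) := by
      funext j
      by_cases h : j = i
      · subst h; rw [if_pos rfl]
      · rw [if_neg h, sub_eq_zero.mpr (hf j h).symm]
    calc divdiff k p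
        = divdiff k (fun j => ((p j).1,
            ((p j).2 - Polynomial.eval (p j).1 f) + Polynomial.eval (p j).1 f)) := by rw [← e0]
      _ = divdiff k (fun j => ((p j).1, (p j).2 - Polynomial.eval (p j).1 f)) +
            divdiff k (fun j => ((p j).1, Polynomial.eval (p j).1 f)) :=
          divdiff_add k _ _ _
      _ = d * (Wt k (fun j => (p j).1) i)⁻¹ := by
          rw [e1, divdiff_delta k _ hx i d, divdiff_graph k _ hx f hdeg, add_zero]
  obtain ⟨b, hb, hWt⟩ := Wt_sign k _ hx i
  have hik : (i : ℕ) ≤ k := Nat.lt_succ_iff.mp i.isLt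
  have hmain : divdiff k p = (-1 : ℝ) ^ (k - (i : ℕ)) * (d * b⁻¹) := by
    have hinv : ((-1 : ℝ) ^ (k - (i : ℕ)))⁻¹ = (-1 : ℝ) ^ (k - (i : ℕ)) := by
      rw [← inv_pow, inv_neg, inv_one]
    rw [hsplit, hWt, mul_inv, hinv]; ring
  constructor
  · intro hlt
    have hd : d < 0 := sub_neg.mpr hlt
    have h2 : divdiff k p = (-1 : ℝ) ^ (k - (i : ℕ) + 1) * ((-d) * b⁻¹) := by
      rw [hmain, pow_succ]; ring
    rw [h2, sign_pow_mul _ _ (mul_pos (neg_pos.mpr hd) (inv_pos.mpr hb)),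
      show k + (i : ℕ) + 1 = (k - (i : ℕ) + 1) + 2 * i by omega]
    norm_num [pow_add, pow_mul]
  · intro hlt
    have hd : 0 < d := sub_pos.mpr hlt
    rw [hmain, sign_pow_mul _ _ (mul_pos hd (inv_pos.mpr hb)),
      show k + (i : ℕ) = (k - (i : ℕ)) + 2 * i by omega]
    norm_num [pow_add, pow_mul]
end

section
/- Let k ≥ 1 and let p₁, …, p_{k+2} be points in ℝ² in k-general position, p_i = (x_i, y_i) with x₁ < ⋯ < x_{k+2}. If Δ_k(p₁, …, p_{k+1}) and Δ_k(p₂, …, p_{k+2}) have the same sign s ∈ {+1, −1}, then for every i ∈ {1, …, k+2}, the divided difference Δ_k of the (k+1)-tuple obtained from (p₁, …, p_{k+2}) by omitting p_i also has sign s. In other words, the 2-coloring of (k+1)-tuples of a set in k-general position by the sign of their k-th divided difference is transitive. -/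
open Finset Function

/-- Explicit (Lagrange-type) formula for divided differences over an index set. -/
noncomputable def DD {ι : Type*} [DecidableEq ι] (x y : ι → ℝ) (S : Finset ι) : ℝ :=
  ∑ j ∈ S, y j / ∏ l ∈ S.erase j, (x j - x l)

lemma DD_erase_eq {ι : Type*} [DecidableEq ι] (x y : ι → ℝ) (S : Finset ι)
    (hinj : Set.InjOn x S) {c : ι} (hc : c ∈ S) :
    DD x y (S.erase c) = ∑ j ∈ S, (x j - x c) * y j / ∏ l ∈ S.erase j, (x j - x l) := by
  rw [DD]
  calc ∑ j ∈ S.erase c, y j / ∏ l ∈ (S.erase c).erase j, (x j - x l)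
      = ∑ j ∈ S.erase c, (x j - x c) * y j / ∏ l ∈ S.erase j, (x j - x l) := by
        refine Finset.sum_congr rfl fun j hj => ?_
        have hjS : j ∈ S := Finset.mem_of_mem_erase hj
        have hjc : j ≠ c := Finset.ne_of_mem_erase hj
        have hcj : c ∈ S.erase j := Finset.mem_erase.2 ⟨hjc.symm, hc⟩
        have hprod : ∏ l ∈ S.erase j, (x j - x l)
            = (x j - x c) * ∏ l ∈ (S.erase j).erase c, (x j - x l) :=
          (Finset.mul_prod_erase _ _ hcj).symm
        have hd : x j - x c ≠ 0 := sub_ne_zero.2 fun h => hjc (hinj hjS hc h)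
        rw [Finset.erase_right_comm, hprod, mul_div_mul_left _ _ hd]
    _ = ∑ j ∈ S, (x j - x c) * y j / ∏ l ∈ S.erase j, (x j - x l) :=
        Finset.sum_erase _ (by simp)

lemma DD_exchange {ι : Type*} [DecidableEq ι] (x y : ι → ℝ) (S : Finset ι)
    (hinj : Set.InjOn x S) {a b : ι} (ha : a ∈ S) (hb : b ∈ S) :
    DD x y (S.erase a) - DD x y (S.erase b) = (x b - x a) * DD x y S := by
  rw [DD_erase_eq x y S hinj ha, DD_erase_eq x y S hinj hb, DD, Finset.mul_sum,
    ← Finset.sum_sub_distrib]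
  refine Finset.sum_congr rfl fun j hj => ?_
  rw [div_sub_div_same, ← mul_div_assoc]
  congr 1
  ring

lemma DD_image {ι κ : Type*} [DecidableEq ι] [DecidableEq κ] {e : ι → κ}
    (he : Function.Injective e) (x y : κ → ℝ) (S : Finset ι) :
    DD (x ∘ e) (y ∘ e) S = DD x y (S.image e) := by
  rw [DD, DD, Finset.sum_image fun a _ b _ h => he h]
  refine Finset.sum_congr rfl fun j hj => ?_
  rw [← Finset.image_erase he, Finset.prod_image fun a _ b _ h => he h]
  rfl

lemma image_succAbove_univ {n : ℕ} (i : Fin (n + 1)) :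
    (Finset.univ : Finset (Fin n)).image i.succAbove = Finset.univ.erase i := by
  apply Finset.eq_of_subset_of_card_le
  · intro j hj
    obtain ⟨l, -, rfl⟩ := Finset.mem_image.1 hj
    exact Finset.mem_erase.2 ⟨Fin.succAbove_ne i l, Finset.mem_univ _⟩
  · rw [Finset.card_erase_of_mem (Finset.mem_univ i),
      Finset.card_image_of_injective _ Fin.succAbove_right_injective]
    simp

lemma DD_succAbove {n : ℕ} (p : Fin (n + 2) → ℝ × ℝ) (i : Fin (n + 2)) :
    DD (fun j : Fin (n + 1) => (p (i.succAbove j)).1)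
      (fun j : Fin (n + 1) => (p (i.succAbove j)).2) Finset.univ
    = DD (fun j => (p j).1) (fun j => (p j).2) (Finset.univ.erase i) := by
  rw [← image_succAbove_univ i]
  exact DD_image (e := i.succAbove) Fin.succAbove_right_injective (fun j => (p j).1)
    (fun j => (p j).2) Finset.univ

lemma divdiff_eq_DD : ∀ (m : ℕ) (p : Fin (m + 1) → ℝ × ℝ),
    Function.Injective (fun i => (p i).1) →
    divdiff m p = DD (fun i => (p i).1) (fun i => (p i).2) Finset.univ
  | 0, p, _ => by simp [divdiff, DD]
  | m + 1, p, hinj => by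
    have hsucc : Function.Injective (fun i : Fin (m + 1) => (p i.succ).1) :=
      hinj.comp (Fin.succ_injective _)
    have hcast : Function.Injective (fun i : Fin (m + 1) => (p i.castSucc).1) :=
      hinj.comp (Fin.castSucc_injective _)
    have h1 := divdiff_eq_DD m (fun i => p i.succ) hsucc
    have h2 := divdiff_eq_DD m (fun i => p i.castSucc) hcast
    have e1 : DD (fun i : Fin (m + 1) => (p i.succ).1) (fun i => (p i.succ).2) Finset.univ
        = DD (fun i => (p i).1) (fun i => (p i).2) (Finset.univ.erase (0 : Fin (m + 2))) := by
      have := DD_succAbove p 0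
      simpa [Fin.succAbove_zero] using this
    have e2 : DD (fun i : Fin (m + 1) => (p i.castSucc).1) (fun i => (p i.castSucc).2)
          Finset.univ
        = DD (fun i => (p i).1) (fun i => (p i).2)
            (Finset.univ.erase (Fin.last (m + 1))) := by
      have := DD_succAbove p (Fin.last (m + 1))
      simpa [Fin.succAbove_last] using this
    have hex := DD_exchange (fun i => (p i).1) (fun i => (p i).2)
      (Finset.univ : Finset (Fin (m + 2))) hinj.injOn
      (Finset.mem_univ (0 : Fin (m + 2))) (Finset.mem_univ (Fin.last (m + 1)))
    have hne : (p (Fin.last (m + 1))).1 - (p 0).1 ≠ 0 := by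
      refine sub_ne_zero.2 fun h => ?_
      have h0 : (Fin.last (m + 1) : Fin (m + 2)) = 0 := hinj h
      simp [Fin.ext_iff] at h0
    rw [show divdiff (m + 1) p
        = (divdiff m (fun i => p i.succ) - divdiff m (fun i => p i.castSucc)) /
            ((p (Fin.last (m + 1))).1 - (p 0).1) from rfl,
      h1, h2, e1, e2, hex]
    field_simp

lemma sign_aux {r s : ℝ} (hs : s = 1 ∨ s = -1) (h : Real.sign r = s) : 0 < s * r := by
  rcases lt_trichotomy r 0 with hr | hr | hr
  · rw [Real.sign_of_neg hr] at h
    rcases hs with rfl | rfl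
    · norm_num at h
    · nlinarith
  · simp [hr] at h; rcases hs with rfl | rfl <;> norm_num at h
  · rw [Real.sign_of_pos hr] at h
    rcases hs with rfl | rfl
    · nlinarith
    · norm_num at h

lemma sign_aux' {r s : ℝ} (hs : s = 1 ∨ s = -1) (h : 0 < s * r) : Real.sign r = s := by
  rcases hs with rfl | rfl
  · rw [one_mul] at h; exact Real.sign_of_pos h
  · rw [Real.sign_of_neg (by nlinarith)]

/-- **Transitivity of the sign coloring** (Lemma 2.5): let `p₁, …, p_{k+2}` be points in
`k`-general position with `x₁ < ⋯ < x_{k+2}`. If the divided differences of the first `k+1`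
and of the last `k+1` points have the same sign `s ∈ {+1, -1}`, then the divided difference of
every `(k+1)`-subtuple (omitting any one point `pᵢ`) also has sign `s`. -/
theorem stmt7 (k : ℕ) (hk : 1 ≤ k) (p : Fin (k + 2) → ℝ × ℝ)
    (hx : StrictMono fun i => (p i).1)
    (hgen : ∀ g : Polynomial ℝ, g.degree < (k : WithBot ℕ) →
      ∀ T : Finset (Fin (k + 2)), (∀ j ∈ T, Polynomial.eval (p j).1 g = (p j).2) →
        T.card ≤ k)
    (s : ℝ) (hs : s = 1 ∨ s = -1)
    (h1 : Real.sign (divdiff k (fun i : Fin (k + 1) => p i.castSucc)) = s)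
    (h2 : Real.sign (divdiff k (fun i : Fin (k + 1) => p i.succ)) = s) :
    ∀ i : Fin (k + 2), Real.sign (divdiff k (fun j : Fin (k + 1) => p (i.succAbove j))) = s := by
  intro i
  set x : Fin (k + 2) → ℝ := fun i => (p i).1 with hxdef
  set y : Fin (k + 2) → ℝ := fun i => (p i).2 with hydef
  have hxinj : Function.Injective x := hx.injective
  have key : ∀ j : Fin (k + 2), divdiff k (fun l => p (j.succAbove l))
      = DD x y (Finset.univ.erase j) := by
    intro j
    have hinj' : Function.Injective (fun l : Fin (k + 1) => (p (j.succAbove l)).1) :=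
      hxinj.comp Fin.succAbove_right_injective
    rw [divdiff_eq_DD k _ hinj', DD_succAbove]
  -- rewrite hypotheses
  have hcast : (fun l : Fin (k + 1) => p l.castSucc)
      = fun l => p ((Fin.last (k + 1)).succAbove l) := by
    funext l; rw [Fin.succAbove_last]
  have hsucc : (fun l : Fin (k + 1) => p l.succ)
      = fun l => p ((0 : Fin (k + 2)).succAbove l) := by
    funext l; rw [Fin.succAbove_zero]
  rw [hcast, key] at h1
  rw [hsucc, key] at h2
  rw [key]
  set A := DD x y (Finset.univ.erase (Fin.last (k + 1))) with hA
  set B := DD x y (Finset.univ.erase (0 : Fin (k + 2))) with hB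
  set F := DD x y (Finset.univ : Finset (Fin (k + 2))) with hF
  have hApos := sign_aux hs h1
  have hBpos := sign_aux hs h2
  have E1 : B - A = (x (Fin.last (k + 1)) - x 0) * F :=
    DD_exchange x y _ hxinj.injOn (Finset.mem_univ _) (Finset.mem_univ _)
  have hT : 0 < x (Fin.last (k + 1)) - x 0 := by
    refine sub_pos.2 (hx ?_)
    exact Fin.pos_iff_ne_zero.2 (by simp [Fin.ext_iff])
  have ht0 : 0 ≤ x i - x 0 := sub_nonneg.2 (hx.monotone (Fin.zero_le i))
  have htT : x i ≤ x (Fin.last (k + 1)) := hx.monotone (Fin.le_last i)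
  rcases eq_or_ne i 0 with rfl | hi0
  · exact h2
  have E2 : B - DD x y (Finset.univ.erase i) = (x i - x 0) * F :=
    DD_exchange x y _ hxinj.injOn (Finset.mem_univ _) (Finset.mem_univ _)
  set D := DD x y (Finset.univ.erase i) with hD
  have key2 : (x (Fin.last (k + 1)) - x 0) * D
      = (x (Fin.last (k + 1)) - x i) * B + (x i - x 0) * A := by
    linear_combination (x i - x 0) * E1 - (x (Fin.last (k + 1)) - x 0) * E2
  apply sign_aux' hs
  have hcombo : 0 < s * ((x (Fin.last (k + 1)) - x 0) * D) := by
    rw [key2]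
    rcases eq_or_lt_of_le ht0 with h0 | h0
    · have hxi : x i = x 0 := by linarith
      have : x (Fin.last (k + 1)) - x i = x (Fin.last (k + 1)) - x 0 := by linarith
      rw [this, hxi]
      have : s * ((x (Fin.last (k+1)) - x 0) * B + (x 0 - x 0) * A)
          = (x (Fin.last (k+1)) - x 0) * (s * B) := by ring
      rw [this]
      exact mul_pos hT hBpos
    · have h1' : 0 ≤ (x (Fin.last (k + 1)) - x i) * (s * B) :=
        mul_nonneg (by linarith) hBpos.le
      have h2' : 0 < (x i - x 0) * (s * A) := mul_pos h0 hApos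
      nlinarith
  nlinarith
end

section
/- For every n ≥ 1, every transitive 2-coloring of the 3-element subsets of {1, 2, …, 4ⁿ} admits an n-element homogeneous subset, i.e., an n-element subset all of whose 3-element subsets receive the same color. -/
/-- A 2-coloring `c` of the `ℓ`-element subsets of the linearly ordered set `Fin N`
is *transitive* if for all `i₁ < ⋯ < i_{ℓ+1}` (i.e. each `(ℓ+1)`-set `T`), whenever the first
`ℓ` elements (`T` minus its maximum) and the last `ℓ` elements (`T` minus its minimum)
receive the same color, then all `ℓ`-element subsets of `T` receive this same color. -/
def IsTransitive {N : ℕ} (ℓ : ℕ) (c : Finset (Fin N) → Bool) : Prop :=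
  ∀ T : Finset (Fin N), T.card = ℓ + 1 → ∀ h : T.Nonempty,
    c (T.erase (T.max' h)) = c (T.erase (T.min' h)) →
    ∀ a ∈ T, c (T.erase a) = c (T.erase (T.min' h))

/-- A set `S` is *homogeneous* for a coloring `c` of `ℓ`-element subsets
if all `ℓ`-element subsets of `S` receive the same color. -/
def HasHomog {N : ℕ} (ℓ n : ℕ) (c : Finset (Fin N) → Bool) : Prop :=
  ∃ S : Finset (Fin N), S.card = n ∧
    ∃ col : Bool, ∀ T ⊆ S, T.card = ℓ → c T = col

/-- `trrams ℓ n` : the Ramsey number for transitive colorings, i.e. the least `N` such that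
every transitive 2-coloring of the `ℓ`-element subsets of `{1, …, N}` admits an `n`-element
homogeneous subset. -/
noncomputable def trrams (ℓ n : ℕ) : ℕ :=
  sInf {N | ∀ c : Finset (Fin N) → Bool, IsTransitive ℓ c → HasHomog ℓ n c}

namespace Stmt8Aux


variable {N : ℕ}

def CT (c : Finset (Fin N) → Bool) (X : Bool) (l : List (Fin N)) : Prop :=
  ∀ t₁ (x y z : Fin N) t₂, l = t₁ ++ x :: y :: z :: t₂ → c {x, y, z} = X

lemma CT_tail {c : Finset (Fin N) → Bool} {X a l} (h : CT c X (a :: l)) : CT c X l := by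
  intro t₁ x y z t₂ he
  exact h (a :: t₁) x y z t₂ (by simp [he])

lemma CT_dropLast {c : Finset (Fin N) → Bool} {X l} (h : CT c X l) : CT c X l.dropLast := by
  intro t₁ x y z t₂ he
  rcases eq_or_ne l [] with rfl | hne
  · simp at he
  · exact h t₁ x y z (t₂ ++ [l.getLast hne])
      (by conv_lhs => rw [← List.dropLast_append_getLast hne, he]
          simp)

lemma nodup_of_gt {l : List (Fin N)} (hp : l.Pairwise (· > ·)) : l.Nodup :=
  hp.imp (fun h => (ne_of_gt h))

/-- Core lemma: a descending list whose consecutive triples all have color `X`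
is homogeneous, provided `c` is transitive. -/
lemma homog_of_CT {c : Finset (Fin N) → Bool} (hc : IsTransitive 3 c) {X : Bool} :
    ∀ k (l : List (Fin N)), l.length = k → l.Pairwise (· > ·) → CT c X l →
      ∀ T ⊆ l.toFinset, T.card = 3 → c T = X := by
  intro k
  induction k with
  | zero =>
    intro l hl _ _ T hT h3
    have : T.card ≤ l.toFinset.card := Finset.card_le_card hT
    have h2 := l.toFinset_card_le
    omega
  | succ k ih =>
    intro l hl hp hct T hT h3
    have hnodup : l.Nodup := nodup_of_gt hp
    have hcards : l.toFinset.card = l.length := List.toFinset_card_of_nodup hnodup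
    have hTle : T.card ≤ l.length := hcards ▸ Finset.card_le_card hT
    -- length ≥ 3
    rcases lt_or_ge (k+1) 4 with hlt | hge
    · -- length = 3 exactly
      have hlen3 : l.length = 3 := by omega
      match l, hlen3 with
      | [a, b, d], _ =>
        have hTeq : T = ({a, b, d} : Finset (Fin N)) := by
          apply Finset.eq_of_subset_of_card_le
          · simpa using hT
          · simp only [h3]
            have hsub : ({a,b,d} : Finset (Fin N)) ⊆ [a,b,d].toFinset := by
              intro x hx; simp at hx; simp; tauto
            calc ({a,b,d} : Finset (Fin N)).card ≤ [a,b,d].toFinset.card :=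
                Finset.card_le_card hsub
              _ = 3 := by rw [hcards]; rfl
        rw [hTeq]
        exact hct [] a b d [] rfl
    · -- length ≥ 4
      obtain ⟨a, l', rfl⟩ : ∃ a l', l = a :: l' := by
        cases l with
        | nil => simp at hl
        | cons a l' => exact ⟨a, l', rfl⟩
      have hl'ne : l' ≠ [] := by
        intro h; rw [h] at hl; simp at hl; omega
      set z := (a :: l').getLast (by simp) with hz
      have hzl' : z = l'.getLast hl'ne := by
        rw [hz]; exact List.getLast_cons hl'ne
      have hamem : ∀ x ∈ l', a > x := by
        intro x hx; exact (List.pairwise_cons.mp hp).1 x hx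
      have hzmem : z ∈ l' := hzl' ▸ List.getLast_mem hl'ne
      have haz : z < a := hamem z hzmem
      -- IH instances
      have ihtail : ∀ T ⊆ l'.toFinset, T.card = 3 → c T = X := by
        apply ih l' (by simpa using hl) (List.pairwise_cons.mp hp).2 (CT_tail hct)
      have ihdrop : ∀ T ⊆ (a :: l').dropLast.toFinset, T.card = 3 → c T = X := by
        apply ih _ (by simp [List.length_dropLast] at *; omega)
          (hp.sublist (List.dropLast_sublist _)) (CT_dropLast hct)
      by_cases haT : a ∈ T
      · by_cases hzT : z ∈ T
        · -- T = {z, m, a}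
          -- get m
          have h2' : (T.erase a).card = 2 := by rw [Finset.card_erase_of_mem haT, h3]
          have hzTa : z ∈ T.erase a := Finset.mem_erase.mpr ⟨ne_of_lt haz, hzT⟩
          have h1' : ((T.erase a).erase z).card = 1 := by
            rw [Finset.card_erase_of_mem hzTa, h2']
          obtain ⟨m, hm⟩ := Finset.card_eq_one.mp h1'
          have hmT : m ∈ T := by
            have : m ∈ (T.erase a).erase z := hm ▸ Finset.mem_singleton_self m
            exact Finset.mem_of_mem_erase (Finset.mem_of_mem_erase this)
          have hma : m ≠ a := by
            have : m ∈ T.erase a := Finset.mem_of_mem_erase (hm ▸ Finset.mem_singleton_self m)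
            exact Finset.ne_of_mem_erase this
          have hmz : m ≠ z := Finset.ne_of_mem_erase (hm ▸ Finset.mem_singleton_self m)
          have hml' : m ∈ l' := by
            have : m ∈ (a :: l').toFinset := hT hmT
            simp at this; tauto
          have hmdrop : m ∈ l'.dropLast := by
            have := List.dropLast_append_getLast hl'ne
            rw [← this] at hml'
            rcases List.mem_append.mp hml' with h | h
            · exact h
            · simp at h; rw [← hzl'] at h; exact absurd h hmz
          -- interior
          have hIlen : l'.dropLast.length = k - 1 := by
            simp at hl ⊢; omega
          have hInodup : l'.dropLast.Nodup :=
            (nodup_of_gt (List.pairwise_cons.mp hp).2).sublist (List.dropLast_sublist _)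
          have hIcard : l'.dropLast.toFinset.card = k - 1 :=
            (List.toFinset_card_of_nodup hInodup).trans hIlen
          obtain ⟨w, hw, hwm⟩ := Finset.exists_mem_ne
            (s := l'.dropLast.toFinset) (by omega) m
          have hwdrop : w ∈ l'.dropLast := List.mem_toFinset.mp hw
          have hwl' : w ∈ l' := (List.dropLast_sublist _).mem hwdrop
          -- all interior elements strictly between z and a
          have hbelow : ∀ x ∈ l', x ≠ z → z < x := by
            intro x hx hxz
            have hxdrop : x ∈ l'.dropLast := by
              have := List.dropLast_append_getLast hl'ne
              rw [← this] at hx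
              rcases List.mem_append.mp hx with h | h
              · exact h
              · simp at h; rw [← hzl'] at h; exact absurd h hxz
            have hpl' : l'.Pairwise (· > ·) := (List.pairwise_cons.mp hp).2
            rw [← List.dropLast_append_getLast hl'ne] at hpl'
            have := (List.pairwise_append.mp hpl').2.2 x hxdrop z (by simp [hzl'])
            exact this
          have hzm : z < m := hbelow m hml' hmz
          have hzw : z < w := hbelow w hwl' (by
            intro h; rw [h] at hwdrop
            have : z ∈ l'.dropLast := hwdrop
            have h2 := hInodup
            -- z is getLast of l', cannot be in dropLast since nodup
            have := List.dropLast_append_getLast hl'ne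
            have hnd := nodup_of_gt (List.pairwise_cons.mp hp).2
            rw [← this] at hnd
            rcases List.nodup_append.mp hnd with ⟨-, -, hdisj⟩
            exact hdisj z ‹z ∈ l'.dropLast› z (by simp [hzl']) rfl  )
          have hwa : w < a := hamem w hwl'
          have hma' : m < a := lt_of_le_of_ne (le_of_lt (hamem m hml')) hma
          have hmw : m ≠ w := fun h => hwm h.symm
          have hne1 : z ≠ m := ne_of_lt hzm
          have hne2 : z ≠ w := ne_of_lt hzw
          have hne3 : z ≠ a := ne_of_lt haz
          have hne4 : m ≠ a := hma
          have hne5 : w ≠ a := ne_of_lt hwa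
          -- the quadruple
          set Q : Finset (Fin N) := insert z (insert m (insert w {a})) with hQ
          have hQcard : Q.card = 4 := by
            rw [hQ, Finset.card_insert_of_notMem (by simp; exact ⟨hne1, hne2, hne3⟩),
              Finset.card_insert_of_notMem (by simp; exact ⟨hmw, hne4⟩),
              Finset.card_insert_of_notMem (by simp; exact hne5)]
            simp
          have hQne : Q.Nonempty := ⟨z, by simp [hQ]⟩
          have hmax : Q.max' hQne = a := by
            apply le_antisymm
            · apply Finset.max'_le
              intro y hy
              simp [hQ] at hy
              rcases hy with rfl | rfl | rfl | rfl
              · exact le_of_lt haz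
              · exact le_of_lt hma'
              · exact le_of_lt hwa
              · exact le_refl _
            · exact Finset.le_max' _ _ (by simp [hQ])
          have hmin : Q.min' hQne = z := by
            apply le_antisymm
            · exact Finset.min'_le _ _ (by simp [hQ])
            · apply Finset.le_min'
              intro y hy
              simp [hQ] at hy
              rcases hy with rfl | rfl | rfl | rfl
              · exact le_refl _
              · exact le_of_lt hzm
              · exact le_of_lt hzw
              · exact le_of_lt haz
          have herase_a : Q.erase a = {z, m, w} := by
            ext x
            simp [hQ, Finset.mem_erase]
            constructor
            · rintro ⟨hxa, rfl | rfl | rfl | rfl⟩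
              exacts [Or.inl rfl, Or.inr (Or.inl rfl), Or.inr (Or.inr rfl), absurd rfl hxa]
            · rintro (rfl | rfl | rfl)
              exacts [⟨hne3, Or.inl rfl⟩, ⟨hne4, Or.inr (Or.inl rfl)⟩,
                ⟨hne5, Or.inr (Or.inr (Or.inl rfl))⟩]
          have herase_z : Q.erase z = {m, w, a} := by
            ext x
            simp [hQ, Finset.mem_erase]
            rintro (rfl | rfl | rfl)
            exacts [fun h => hne1 h.symm, fun h => hne2 h.symm, fun h => hne3 h.symm]
          have herase_w : Q.erase w = {z, m, a} := by
            ext x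
            simp [hQ, Finset.mem_erase]
            constructor
            · rintro ⟨hxw, rfl | rfl | rfl | rfl⟩
              exacts [Or.inl rfl, Or.inr (Or.inl rfl), absurd rfl hxw, Or.inr (Or.inr rfl)]
            · rintro (rfl | rfl | rfl)
              exacts [⟨hne2, Or.inl rfl⟩, ⟨hmw, Or.inr (Or.inl rfl)⟩,
                ⟨fun h => hne5 h.symm, Or.inr (Or.inr (Or.inr rfl))⟩]
          have hdropcons : (a :: l').dropLast = a :: l'.dropLast :=
            List.dropLast_cons_of_ne_nil hl'ne  -- name?
          have hT1 : c ({z, m, w} : Finset (Fin N)) = X := by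
            apply ihtail
            · intro x hx
              simp at hx
              rcases hx with rfl | rfl | rfl
              · exact List.mem_toFinset.mpr hzmem
              · exact List.mem_toFinset.mpr hml'
              · exact List.mem_toFinset.mpr hwl'
            · rw [Finset.card_insert_of_notMem (by simp; exact ⟨hne1, hne2⟩),
                Finset.card_insert_of_notMem (by simp; exact hmw)]
              simp
          have hT2 : c ({m, w, a} : Finset (Fin N)) = X := by
            apply ihdrop
            · intro x hx
              simp only [Finset.mem_insert, Finset.mem_singleton] at hx
              rw [List.mem_toFinset, hdropcons]
              rcases hx with rfl | rfl | rfl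
              · exact List.mem_cons_of_mem _ hmdrop
              · exact List.mem_cons_of_mem _ hwdrop
              · exact List.mem_cons_self
            · rw [Finset.card_insert_of_notMem (by simp; exact ⟨hmw, hne4⟩),
                Finset.card_insert_of_notMem (by simp; exact hne5)]
              simp
          have heq : c (Q.erase (Q.max' hQne)) = c (Q.erase (Q.min' hQne)) := by
            rw [hmax, hmin, herase_a, herase_z, hT1, hT2]
          have hall := hc Q (by rw [hQcard]) hQne heq w (by simp [hQ])
          rw [hmin, herase_z, hT2, herase_w] at hall
          have hTeq : T = ({z, m, a} : Finset (Fin N)) := by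
            symm
            apply Finset.eq_of_subset_of_card_le
            · intro x hx
              simp at hx
              rcases hx with rfl | rfl | rfl
              · exact hzT
              · exact hmT
              · exact haT
            · rw [h3, Finset.card_insert_of_notMem (by simp; exact ⟨hne1, hne3⟩),
                Finset.card_insert_of_notMem (by simp; exact hne4)]
              simp
          rw [hTeq]
          exact hall
        · -- z ∉ T : use dropLast
          apply ihdrop T _ h3
          intro x hx
          have hxl : x ∈ (a :: l').toFinset := hT hx
          have hxz : x ≠ z := by rintro rfl; exact hzT hx
          rw [List.mem_toFinset] at hxl ⊢
          rw [← List.dropLast_append_getLast (l := a :: l') (by simp)] at hxl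
          rcases List.mem_append.mp hxl with h | h
          · exact h
          · simp [← hz] at h; exact absurd h hxz
      · -- a ∉ T : use tail
        apply ihtail T _ h3
        intro x hx
        have hxl : x ∈ (a :: l').toFinset := hT hx
        simp at hxl
        rcases hxl with rfl | h
        · exact absurd hx haT
        · exact List.mem_toFinset.mpr h



variable {N : ℕ}


lemma tripleEq (x y z : Fin N) : ({x, y, z} : Finset (Fin N)) = {z, y, x} := by
  ext a; simp; tauto

lemma CT_reverse {c : Finset (Fin N) → Bool} {X l} (h : CT c X l) : CT c X l.reverse := by
  intro t₁ x y z t₂ he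
  have hl : l = t₂.reverse ++ z :: y :: x :: t₁.reverse := by
    have h2 := congrArg List.reverse he
    simp only [List.reverse_reverse, List.reverse_append, List.reverse_cons,
      List.append_assoc] at h2
    simpa using h2
  rw [tripleEq]
  exact h _ z y x _ hl

lemma CT_cons {c : Finset (Fin N) → Bool} {X} {a x y : Fin N} {t}
    (h : CT c X (x :: y :: t)) (h3 : c {a, x, y} = X) : CT c X (a :: x :: y :: t) := by
  intro t₁ p q w t₂ he
  cases t₁ with
  | nil =>
    simp only [List.nil_append, List.cons.injEq] at he
    obtain ⟨rfl, rfl, rfl, -⟩ := he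
    exact h3
  | cons b t₁ =>
    simp only [List.cons_append, List.cons.injEq] at he
    exact h t₁ p q w t₂ he.2

lemma CT_triple {c : Finset (Fin N) → Bool} {X} {x y z : Fin N}
    (h : c {x, y, z} = X) : CT c X [x, y, z] := by
  intro t₁ p q w t₂ he
  cases t₁ with
  | nil =>
    simp only [List.nil_append, List.cons.injEq] at he
    obtain ⟨rfl, rfl, rfl, -⟩ := he
    exact h
  | cons b t' =>
    exfalso
    have := congrArg List.length he
    simp at this
    omega

lemma pairwise_triple_of_decomp {l t₁ t₂ : List (Fin N)} {x y z : Fin N}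
    {R : Fin N → Fin N → Prop} (hp : l.Pairwise R) (he : l = t₁ ++ x :: y :: z :: t₂) :
    R x y ∧ R y z ∧ R x z := by
  subst he
  have hsub : [x, y, z].Sublist (t₁ ++ x :: y :: z :: t₂) := by
    apply List.Sublist.trans _ (List.sublist_append_right t₁ _)
    exact (List.prefix_iff_eq_append.mpr (by simp)).sublist
  have h3 := hp.sublist hsub
  simp only [List.pairwise_cons, List.mem_cons, List.mem_singleton] at h3
  refine ⟨h3.1 y (by tauto), ?_, h3.1 z (by tauto)⟩
  exact h3.2.1 z (by tauto)

lemma CT_of_all_desc {c : Finset (Fin N) → Bool} {V : Finset (Fin N)} {Y : Bool}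
    (hall : ∀ x y z : Fin N, x ∈ V → y ∈ V → z ∈ V → z < y → y < x → c {x, y, z} = Y)
    {l : List (Fin N)} (hp : l.Pairwise (· > ·)) (hmem : ∀ x ∈ l, x ∈ V) : CT c Y l := by
  intro t₁ x y z t₂ he
  obtain ⟨h1, h2, -⟩ := pairwise_triple_of_decomp hp he
  exact hall x y z (hmem x (by simp [he])) (hmem y (by simp [he])) (hmem z (by simp [he])) h2 h1

lemma CT_of_all_asc {c : Finset (Fin N) → Bool} {V : Finset (Fin N)} {Y : Bool}
    (hall : ∀ x y z : Fin N, x ∈ V → y ∈ V → z ∈ V → z < y → y < x → c {x, y, z} = Y)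
    {l : List (Fin N)} (hp : l.Pairwise (· < ·)) (hmem : ∀ x ∈ l, x ∈ V) : CT c Y l := by
  intro t₁ x y z t₂ he
  obtain ⟨h1, h2, -⟩ := pairwise_triple_of_decomp hp he
  rw [tripleEq]
  exact hall z y x (hmem z (by simp [he])) (hmem y (by simp [he])) (hmem x (by simp [he])) h1 h2

lemma exists_desc_list (V : Finset (Fin N)) (m : ℕ) (hm : m ≤ V.card) :
    ∃ l : List (Fin N), l.Pairwise (· > ·) ∧ (∀ x ∈ l, x ∈ V) ∧ l.length = m := by
  refine ⟨((V.sort (· ≤ ·)).reverse).take m, ?_, ?_, ?_⟩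
  · apply List.Pairwise.sublist (List.take_sublist _ _)
    rw [List.pairwise_reverse]
    exact (Finset.sortedLT_sort V).pairwise
  · intro x hx
    have := (List.take_sublist m _).subset hx
    rw [List.mem_reverse, Finset.mem_sort] at this
    exact this
  · rw [List.length_take, List.length_reverse, Finset.length_sort]
    omega

lemma triple_pairwise {R : Fin N → Fin N → Prop} {x y z : Fin N}
    (h1 : R x y) (h2 : R y z) (h3 : R x z) : ([x, y, z] : List (Fin N)).Pairwise R := by
  refine List.Pairwise.cons ?_ (List.Pairwise.cons ?_ (List.pairwise_singleton R z))
  · intro a ha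
    rcases List.mem_cons.mp ha with rfl | ha
    · exact h1
    · rw [List.mem_singleton] at ha; subst ha; exact h3
  · intro a ha
    rw [List.mem_singleton] at ha; subst ha; exact h2

/-- Monochromatic tight path lemma (Fox–Pach–Sudakov–Suk style recursion). -/
lemma lemB (c : Finset (Fin N) → Bool) :
    ∀ m r s : ℕ, r + s ≤ m → 3 ≤ r → 3 ≤ s → ∀ V : Finset (Fin N),
      Nat.choose (r + s - 4) (r - 2) < V.card →
      (∃ l : List (Fin N), l.Pairwise (· > ·) ∧ CT c true l ∧ l.length = r ∧
        ∀ x ∈ l, x ∈ V) ∨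
      (∃ l : List (Fin N), l.Pairwise (· < ·) ∧ CT c false l ∧ l.length = s ∧
        ∀ x ∈ l, x ∈ V) := by
  intro m
  induction m with
  | zero => intro r s hm hr hs; omega
  | succ m ih =>
    intro r s hm hr hs V hV
    by_cases hr3 : r = 3
    · subst hr3
      by_cases hex : ∃ x y z : Fin N, x ∈ V ∧ y ∈ V ∧ z ∈ V ∧ z < y ∧ y < x ∧
          c {x, y, z} = true
      · obtain ⟨x, y, z, hx, hy, hz, hzy, hyx, hcol⟩ := hex
        refine Or.inl ⟨[x, y, z], ?_, CT_triple hcol, rfl, ?_⟩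
        · exact triple_pairwise hyx hzy (lt_trans hzy hyx)
        · intro t ht; simp at ht; rcases ht with rfl | rfl | rfl <;> assumption
      · push_neg at hex
        have hall : ∀ x y z : Fin N, x ∈ V → y ∈ V → z ∈ V → z < y → y < x →
            c {x, y, z} = false := by
          intro x y z hx hy hz h1 h2
          have := hex x y z hx hy hz h1 h2
          simpa using this
        have hcard : s ≤ V.card := by
          have e : Nat.choose (3 + s - 4) (3 - 2) = s - 1 := by
            rw [show (3:ℕ) - 2 = 1 from rfl, Nat.choose_one_right]; omega
          rw [e] at hV
          omega
        obtain ⟨l, hp, hmem, hlen⟩ := exists_desc_list V s hcard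
        refine Or.inr ⟨l.reverse, ?_, CT_reverse (CT_of_all_desc hall hp hmem), by
          simpa using hlen, by intro x hx; exact hmem x (List.mem_reverse.mp hx)⟩
        rw [List.pairwise_reverse]
        exact hp
    · by_cases hs3 : s = 3
      · subst hs3
        by_cases hex : ∃ x y z : Fin N, x ∈ V ∧ y ∈ V ∧ z ∈ V ∧ z < y ∧ y < x ∧
            c {x, y, z} = false
        · obtain ⟨x, y, z, hx, hy, hz, hzy, hyx, hcol⟩ := hex
          refine Or.inr ⟨[z, y, x], ?_,
            CT_triple (show c {z, y, x} = false by rw [tripleEq]; exact hcol), rfl, ?_⟩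
          · exact triple_pairwise hzy hyx (lt_trans hzy hyx)
          · intro t ht; simp at ht; rcases ht with rfl | rfl | rfl <;> assumption
        · push_neg at hex
          have hall : ∀ x y z : Fin N, x ∈ V → y ∈ V → z ∈ V → z < y → y < x →
              c {x, y, z} = true := by
            intro x y z hx hy hz h1 h2
            have := hex x y z hx hy hz h1 h2
            simpa using this
          have hcard : r ≤ V.card := by
            obtain ⟨a, rfl⟩ := Nat.exists_eq_add_of_le hr
            have e : Nat.choose (3 + a + 3 - 4) (3 + a - 2) = a + 2 := by
              have e1 : 3 + a + 3 - 4 = (a + 1) + 1 := by omega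
              have e2 : 3 + a - 2 = a + 1 := by omega
              rw [e1, e2, Nat.choose_succ_self_right]
            rw [e] at hV
            omega
          obtain ⟨l, hp, hmem, hlen⟩ := exists_desc_list V r hcard
          exact Or.inl ⟨l, hp, CT_of_all_desc hall hp hmem, hlen, hmem⟩
      · -- r, s ≥ 4
        obtain ⟨a, rfl⟩ : ∃ a, r = 4 + a := by
          obtain ⟨a, rfl⟩ := Nat.exists_eq_add_of_le hr; exact ⟨a - 1, by omega⟩
        obtain ⟨b, rfl⟩ : ∃ b, s = 4 + b := by
          obtain ⟨b, rfl⟩ := Nat.exists_eq_add_of_le hs; exact ⟨b - 1, by omega⟩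
        classical
        set P : Fin N → Prop := fun v => ∃ q : List (Fin N),
          (v :: q).Pairwise (· > ·) ∧ CT c true (v :: q) ∧ (v :: q).length = 3 + a ∧
          ∀ x ∈ v :: q, x ∈ V with hP
        set W : Finset (Fin N) := V.filter P with hW
        by_cases hcase : Nat.choose (a + b + 3) (a + 1) < (V \ W).card
        · have := ih (3 + a) (4 + b) (by omega) (by omega) (by omega) (V \ W) (by
            have e1 : 3 + a + (4 + b) - 4 = a + b + 3 := by omega
            have e2 : 3 + a - 2 = a + 1 := by omega
            rw [e1, e2]; exact hcase)
          rcases this with ⟨l, hp, hct, hlen, hmem⟩ | ⟨l, hp, hct, hlen, hmem⟩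
          · exfalso
            obtain ⟨v, q, rfl⟩ : ∃ v q, l = v :: q := by
              cases l with
              | nil => simp at hlen; omega
              | cons v q => exact ⟨v, q, rfl⟩
            have hvV : v ∈ V \ W := hmem v (by simp)
            have hvW : v ∈ W := by
              rw [hW, Finset.mem_filter]
              refine ⟨(Finset.mem_sdiff.mp hvV).1, q, hp, hct, hlen, ?_⟩
              intro x hx
              exact (Finset.mem_sdiff.mp (hmem x hx)).1
            exact (Finset.mem_sdiff.mp hvV).2 hvW
          · exact Or.inr ⟨l, hp, hct, hlen, fun x hx =>
              (Finset.mem_sdiff.mp (hmem x hx)).1⟩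
        · have hWsub : W ⊆ V := Finset.filter_subset _ _
          have hcards : (V \ W).card + W.card = V.card :=
            Finset.card_sdiff_add_card_eq_card hWsub
          have hpascal : Nat.choose (a + b + 4) (a + 2) =
              Nat.choose (a + b + 3) (a + 1) + Nat.choose (a + b + 3) (a + 2) := by
            have e1 : a + b + 4 = (a + b + 3) + 1 := by omega
            have e2 : a + 2 = (a + 1) + 1 := by omega
            rw [e1, e2, Nat.choose_succ_succ]
          have hVc : Nat.choose (a + b + 4) (a + 2) < V.card := by
            have e1 : 4 + a + (4 + b) - 4 = a + b + 4 := by omega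
            have e2 : 4 + a - 2 = a + 2 := by omega
            rw [e1, e2] at hV; exact hV
          have hWcard : Nat.choose (a + b + 3) (a + 2) < W.card := by omega
          have := ih (4 + a) (3 + b) (by omega) (by omega) (by omega) W (by
            have e1 : 4 + a + (3 + b) - 4 = a + b + 3 := by omega
            have e2 : 4 + a - 2 = a + 2 := by omega
            rw [e1, e2]; exact hWcard)
          rcases this with ⟨l, hp, hct, hlen, hmem⟩ | ⟨l, hp, hct, hlen, hmem⟩
          · exact Or.inl ⟨l, hp, hct, hlen, fun x hx => hWsub (hmem x hx)⟩
          · obtain ⟨v₁, v₂, rest, rfl⟩ : ∃ v₁ v₂ rest, l = v₁ :: v₂ :: rest := by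
              cases l with
              | nil => simp at hlen; omega
              | cons v₁ t =>
                cases t with
                | nil => simp at hlen; omega
                | cons v₂ rest => exact ⟨v₁, v₂, rest, rfl⟩
            have hv₁W : v₁ ∈ W := hmem v₁ (by simp)
            obtain ⟨-, q, hqp, hqct, hqlen, hqmem⟩ := Finset.mem_filter.mp hv₁W
            obtain ⟨u, q', rfl⟩ : ∃ u q', q = u :: q' := by
              cases q with
              | nil => simp at hqlen; omega
              | cons u q' => exact ⟨u, q', rfl⟩
            have hv12 : v₁ < v₂ := (List.pairwise_cons.mp hp).1 v₂ (by simp)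
            have huv₁ : u < v₁ := (List.pairwise_cons.mp hqp).1 u (by simp)
            cases ht : c {v₂, v₁, u}
            · -- blue : extend ascending path downwards with u
              refine Or.inr ⟨u :: v₁ :: v₂ :: rest, ?_, ?_, by simp at hlen ⊢; omega, ?_⟩
              · rw [List.pairwise_cons]
                refine ⟨?_, hp⟩
                intro x hx
                rcases List.mem_cons.mp hx with rfl | hx
                · exact huv₁
                · exact lt_trans huv₁ ((List.pairwise_cons.mp hp).1 x hx)
              · apply CT_cons hct
                rw [show ({u, v₁, v₂} : Finset (Fin N)) = {v₂, v₁, u} from tripleEq u v₁ v₂]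
                exact ht
              · intro x hx
                rcases List.mem_cons.mp hx with rfl | hx
                · exact hqmem x (by simp)
                · exact hWsub (hmem x hx)
            · -- red : extend descending path upwards with v₂
              refine Or.inl ⟨v₂ :: v₁ :: u :: q', ?_, CT_cons hqct ht, by
                simp at hqlen ⊢; omega, ?_⟩
              · rw [List.pairwise_cons]
                refine ⟨?_, hqp⟩
                intro x hx
                rcases List.mem_cons.mp hx with rfl | hx
                · exact hv12
                · exact lt_trans ((List.pairwise_cons.mp hqp).1 x hx) hv12
              · have hv₂V : v₂ ∈ V := hWsub (hmem v₂ (by simp))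
                intro x hx
                rcases List.mem_cons.mp hx with rfl | hx
                · exact hv₂V
                · exact hqmem x hx
        

lemma choose_le_two_pow (t k : ℕ) : Nat.choose t k ≤ 2 ^ t := by
  rcases le_or_gt k t with h | h
  · calc Nat.choose t k ≤ ∑ i ∈ Finset.range (t + 1), Nat.choose t i :=
        Finset.single_le_sum (fun i _ => Nat.zero_le _) (Finset.mem_range.mpr (by omega))
      _ = 2 ^ t := Nat.sum_range_choose t
  · rw [Nat.choose_eq_zero_of_lt h]; exact Nat.zero_le _

end Stmt8Aux

/-- **Base case of Theorem 1.4**: `trrams₃(n) ≤ 4ⁿ`. For every `n ≥ 1`, every transitive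
2-coloring of the 3-element subsets of `{1, …, 4ⁿ}` admits an `n`-element homogeneous subset. -/
theorem stmt8 (n : ℕ) (hn : 1 ≤ n) (c : Finset (Fin (4 ^ n)) → Bool)
    (hc : IsTransitive 3 c) : HasHomog 3 n c := by
  open Stmt8Aux in
  have hcardu : (Finset.univ : Finset (Fin (4 ^ n))).card = 4 ^ n := by
    rw [Finset.card_univ, Fintype.card_fin]
  rcases lt_or_ge n 3 with hn3 | hn3
  · -- trivial small cases
    obtain ⟨S, -, hScard⟩ := Finset.exists_subset_card_eq
      (show n ≤ (Finset.univ : Finset (Fin (4 ^ n))).card by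
        rw [hcardu]
        calc n ≤ 4 ^ n := Nat.le_of_lt (Nat.lt_pow_self (by norm_num : 1 < 4))
          _ = 4 ^ n := rfl)
    refine ⟨S, hScard, true, fun T hT h3 => ?_⟩
    exfalso
    have := Finset.card_le_card hT
    omega
  · -- main case via the monochromatic tight path lemma
    have hbound : Nat.choose (n + n - 4) (n - 2) <
        (Finset.univ : Finset (Fin (4 ^ n))).card := by
      rw [hcardu]
      calc Nat.choose (n + n - 4) (n - 2) ≤ 2 ^ (n + n - 4) :=
          Stmt8Aux.choose_le_two_pow _ _
        _ < 2 ^ (2 * n) := Nat.pow_lt_pow_right (by norm_num) (by omega)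
        _ = 4 ^ n := by rw [show (4:ℕ) = 2 ^ 2 from rfl, ← pow_mul, Nat.mul_comm]
    rcases Stmt8Aux.lemB c (n + n) n n le_rfl hn3 hn3 Finset.univ hbound with
      ⟨l, hp, hct, hlen, -⟩ | ⟨l, hp, hct, hlen, -⟩
    · refine ⟨l.toFinset, ?_, true, ?_⟩
      · rw [List.toFinset_card_of_nodup (Stmt8Aux.nodup_of_gt hp)]
        exact hlen
      · exact Stmt8Aux.homog_of_CT hc l.length l rfl hp hct
    · refine ⟨l.reverse.toFinset, ?_, false, ?_⟩
      · rw [List.toFinset_card_of_nodup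
          (Stmt8Aux.nodup_of_gt (List.pairwise_reverse.mpr hp))]
        rw [List.length_reverse]
        exact hlen
      · exact Stmt8Aux.homog_of_CT hc l.reverse.length l.reverse rfl
          (List.pairwise_reverse.mpr hp) (Stmt8Aux.CT_reverse hct)
end

section
/- Let k ≥ 3 and n ≥ 1, and let M be a positive integer such that every transitive 2-coloring of the k-element subsets of {1, …, M} admits an n-element homogeneous subset. Then every transitive 2-coloring of the (k+1)-element subsets of {1, …, N}, where N = 2^{M^k}, admits an n-element homogeneous subset. -/
lemma key_ineq (k M : ℕ) (hk : 3 ≤ k) : Nat.choose (M+1) k + M ≤ M ^ k := by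
  rcases Nat.lt_or_ge M 2 with hM | hM
  · interval_cases M
    · simp [Nat.choose_eq_zero_of_lt (by omega : 1 < k), Nat.zero_pow (by omega : 0 < k)]
    · simp [Nat.choose_eq_zero_of_lt (by omega : 2 < k)]
  · obtain ⟨j, rfl⟩ : ∃ j, k = j + 1 := ⟨k - 1, by omega⟩
    have h6 : 6 ≤ (j+1).factorial := by
      calc (6:ℕ) = (3:ℕ).factorial := rfl
        _ ≤ (j+1).factorial := Nat.factorial_le (by omega)
    have h1 : 6 * Nat.choose (M+1) (j+1) ≤ (M+1) * M ^ j := by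
      calc 6 * Nat.choose (M+1) (j+1) ≤ (j+1).factorial * Nat.choose (M+1) (j+1) :=
            Nat.mul_le_mul_right _ h6
        _ = (M+1).descFactorial (j+1) := (Nat.descFactorial_eq_factorial_mul_choose _ _).symm
        _ = (M+1) * M.descFactorial j := Nat.succ_descFactorial_succ M j
        _ ≤ (M+1) * M ^ j := Nat.mul_le_mul_left _ (Nat.descFactorial_le_pow _ _)
    have h2 : (M+1) * M ^ j ≤ 2 * M ^ (j+1) := by
      calc (M+1) * M ^ j ≤ (2*M) * M ^ j := Nat.mul_le_mul_right _ (by omega)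
        _ = 2 * M ^ (j+1) := by ring
    have h3 : 4 * M ≤ M ^ (j+1) := by
      have hj : 2 ≤ j := by omega
      calc 4 * M = 2^2 * M := by norm_num
        _ ≤ 2^j * M := Nat.mul_le_mul_right _ (Nat.pow_le_pow_right (by norm_num) hj)
        _ ≤ M^j * M := Nat.mul_le_mul_right _ (Nat.pow_le_pow_left hM j)
        _ = M ^ (j+1) := by ring
    have h12 := h1.trans h2
    linarith

set_option maxHeartbeats 2000000 in
lemma exists_endhomog (k M : ℕ) (hk : 3 ≤ k) (c : Finset (Fin (2 ^ M ^ k)) → Bool) :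
    ∃ X : Finset (Fin (2 ^ M ^ k)), X.card = M + 1 ∧
      ∀ S ⊆ X, S.card = k → ∀ y ∈ X, (∀ s ∈ S, s < y) → ∀ z ∈ X, (∀ s ∈ S, s < z) →
        c (insert y S) = c (insert z S) := by
  have hkey : Nat.choose (M+1) k + M ≤ M ^ k := key_ineq k M hk
  have key : ∀ i ≤ M + 1, ∃ X A : Finset (Fin (2 ^ M ^ k)),
      X.card = i ∧ (∀ u ∈ X, ∀ a ∈ A, u < a) ∧
      2 ^ (M ^ k - Nat.choose i k) ≤ A.card + i ∧
      (∀ S ⊆ X, S.card = k → ∀ y z : Fin (2 ^ M ^ k),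
        (y ∈ A ∨ (y ∈ X ∧ ∀ s ∈ S, s < y)) → (z ∈ A ∨ (z ∈ X ∧ ∀ s ∈ S, s < z)) →
        c (insert y S) = c (insert z S)) := by
    intro i
    induction i with
    | zero =>
      intro _
      refine ⟨∅, Finset.univ, rfl, by simp, ?_, ?_⟩
      · simp [Finset.card_univ, Nat.choose_eq_zero_of_lt (by omega : 0 < k)]
      · intro S hS hScard y z _ _
        have : S = ∅ := Finset.subset_empty.mp hS
        subst this; simp at hScard; omega
    | succ i ih =>
      intro hi
      obtain ⟨X, A, hXcard, hXA, hAcard, hInv⟩ := ih (by omega)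
      -- A is nonempty
      have hchooseM : Nat.choose (i+1) k ≤ Nat.choose (M+1) k := Nat.choose_le_choose k (by omega)
      have hchoosei : Nat.choose i k ≤ Nat.choose (M+1) k := Nat.choose_le_choose k (by omega)
      have hMpow : M + 1 ≤ 2 ^ (M ^ k - Nat.choose (M+1) k) := by
        calc M + 1 ≤ 2 ^ M := Nat.lt_two_pow_self (n := M)
          _ ≤ 2 ^ (M ^ k - Nat.choose (M+1) k) := Nat.pow_le_pow_right (by norm_num) (by omega)
      have h2i : 2 ^ (M ^ k - Nat.choose (M+1) k) ≤ 2 ^ (M ^ k - Nat.choose i k) :=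
        Nat.pow_le_pow_right (by norm_num) (by omega)
      have hA1 : 1 ≤ A.card := by omega
      have hAne : A.Nonempty := Finset.card_pos.mp hA1
      obtain ⟨x, hxdef⟩ : ∃ x, x = A.min' hAne := ⟨_, rfl⟩
      have hxA : x ∈ A := hxdef ▸ A.min'_mem hAne
      have hxX : x ∉ X := fun hx => lt_irrefl x (hXA x hx x hxA)
      -- Pascal
      have hPascal : Nat.choose (i+1) k = Nat.choose i (k-1) + Nat.choose i k := by
        obtain ⟨j, rfl⟩ : ∃ j, k = j + 1 := ⟨k - 1, by omega⟩
        simpa using Nat.choose_succ_succ' i j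
      -- new subsets
      obtain ⟨newS, hnewS⟩ :
          ∃ newS, newS = ((insert x X).powersetCard k).filter (fun S => x ∈ S) := ⟨_, rfl⟩
      have hnewS_le : newS.card ≤ Nat.choose i (k-1) := by
        have hsub : newS ⊆ (X.powersetCard (k-1)).image (insert x) := by
          intro S hS
          rw [hnewS, Finset.mem_filter, Finset.mem_powersetCard] at hS
          obtain ⟨⟨hS1, hS2⟩, hS3⟩ := hS
          refine Finset.mem_image.mpr ⟨S.erase x, ?_, Finset.insert_erase hS3⟩
          rw [Finset.mem_powersetCard]
          constructor
          · intro a ha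
            have := hS1 (Finset.mem_of_mem_erase ha)
            rcases Finset.mem_insert.mp this with h | h
            · exact absurd h (Finset.ne_of_mem_erase ha)
            · exact h
          · rw [Finset.card_erase_of_mem hS3, hS2]
        calc newS.card ≤ ((X.powersetCard (k-1)).image (insert x)).card := Finset.card_le_card hsub
          _ ≤ (X.powersetCard (k-1)).card := Finset.card_image_le
          _ = Nat.choose i (k-1) := by rw [Finset.card_powersetCard, hXcard]
      obtain ⟨trace, htrace⟩ : ∃ trace : Fin (2 ^ M ^ k) → Finset (Finset (Fin (2 ^ M ^ k))),
          trace = fun y => newS.filter (fun S => c (insert y S)) := ⟨_, rfl⟩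
      obtain ⟨Q, hQ⟩ : ∃ Q, Q = 2 ^ (M ^ k - Nat.choose (i+1) k) := ⟨_, rfl⟩
      obtain ⟨n₀, hn₀⟩ : ∃ n₀, n₀ = Q - (i+1) := ⟨_, rfl⟩
      have hPQ : 2 ^ Nat.choose i (k-1) * Q = 2 ^ (M ^ k - Nat.choose i k) := by
        rw [hQ, ← pow_add]
        congr 1
        omega
      -- pigeonhole
      have hmaps : ∀ y ∈ A.erase x, trace y ∈ newS.powerset := fun y _ =>
        Finset.mem_powerset.mpr (htrace ▸ Finset.filter_subset _ _)
      have hcount : (newS.powerset).card * n₀ ≤ (A.erase x).card := by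
        rw [Finset.card_powerset, Finset.card_erase_of_mem hxA]
        have h1 : 2 ^ newS.card ≤ 2 ^ Nat.choose i (k-1) :=
          Nat.pow_le_pow_right (by norm_num) hnewS_le
        have h2 : 2 ^ newS.card * n₀ ≤ 2 ^ Nat.choose i (k-1) * n₀ := Nat.mul_le_mul_right _ h1
        rcases le_or_gt Q (i+1) with hQle | hQgt
        · have : n₀ = 0 := by omega
          rw [this] at h2 ⊢
          simpa using h2
        · have hsum : n₀ + (i+1) = Q := by omega
          have hexp : 2 ^ Nat.choose i (k-1) * n₀ + 2 ^ Nat.choose i (k-1) * (i+1)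
              = 2 ^ (M ^ k - Nat.choose i k) := by
            rw [← Nat.mul_add, hsum, hPQ]
          have hge : i + 1 ≤ 2 ^ Nat.choose i (k-1) * (i+1) :=
            Nat.le_mul_of_pos_left _ (Nat.pow_pos (by norm_num))
          omega
      obtain ⟨v, _, hfib⟩ := Finset.exists_le_card_fiber_of_mul_le_card_of_maps_to hmaps
        ⟨∅, Finset.empty_mem_powerset _⟩ hcount
      obtain ⟨F, hF⟩ : ∃ F, F = (A.erase x).filter (fun y => trace y = v) := ⟨_, rfl⟩
      have hfibF : n₀ ≤ F.card := by rw [hF]; exact hfib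
      have hFsub : ∀ y ∈ F, y ∈ A ∧ x < y := by
        intro y hy
        rw [hF, Finset.mem_filter, Finset.mem_erase] at hy
        obtain ⟨⟨hyne, hyA⟩, _⟩ := hy
        refine ⟨hyA, lt_of_le_of_ne ?_ (Ne.symm hyne)⟩
        rw [hxdef]; exact A.min'_le y hyA
      refine ⟨insert x X, F, ?_, ?_, ?_, ?_⟩
      · rw [Finset.card_insert_of_notMem hxX, hXcard]
      · intro u hu y hy
        rcases Finset.mem_insert.mp hu with rfl | huX
        · exact (hFsub y hy).2
        · exact hXA u huX y (hFsub y hy).1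
      · omega
      · intro S hS hScard y z hy hz
        by_cases hxS : x ∈ S
        · -- S is a "new" subset: y z must be in F
          have hSnew : S ∈ newS := by
            rw [hnewS, Finset.mem_filter, Finset.mem_powersetCard]
            exact ⟨⟨hS, hScard⟩, hxS⟩
          have hymem : ∀ w : Fin (2 ^ M ^ k),
              (w ∈ F ∨ (w ∈ insert x X ∧ ∀ s ∈ S, s < w)) → w ∈ F := by
            intro w hw
            rcases hw with hw | ⟨hwX, hwgt⟩
            · exact hw
            · exfalso
              rcases Finset.mem_insert.mp hwX with h | hwX'
              · have hxw := hwgt x hxS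
                rw [h] at hxw
                exact lt_irrefl x hxw
              · exact lt_irrefl x ((hwgt x hxS).trans (hXA w hwX' x hxA))
          have hyF := hymem y hy
          have hzF := hymem z hz
          have hty : trace y = v := by
            rw [hF, Finset.mem_filter] at hyF; exact hyF.2
          have htz : trace z = v := by
            rw [hF, Finset.mem_filter] at hzF; exact hzF.2
          have h1 : (c (insert y S) = true) ↔ S ∈ v := by
            rw [← hty, htrace]
            simp only [Finset.mem_filter]
            tauto
          have h2 : (c (insert z S) = true) ↔ S ∈ v := by
            rw [← htz, htrace]
            simp only [Finset.mem_filter]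
            tauto
          exact Bool.eq_iff_iff.mpr (h1.trans h2.symm)
        · -- S ⊆ X: use old invariant
          have hSX : S ⊆ X := by
            intro s hs
            rcases Finset.mem_insert.mp (hS hs) with h | h
            · rw [h] at hs; exact absurd hs hxS
            · exact h
          have hgood : ∀ w : Fin (2 ^ M ^ k),
              (w ∈ F ∨ (w ∈ insert x X ∧ ∀ s ∈ S, s < w)) →
              (w ∈ A ∨ (w ∈ X ∧ ∀ s ∈ S, s < w)) := by
            intro w hw
            rcases hw with hw | ⟨hwX, hwgt⟩
            · exact Or.inl (hFsub w hw).1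
            · rcases Finset.mem_insert.mp hwX with h | hwX'
              · exact Or.inl (by rw [h]; exact hxA)
              · exact Or.inr ⟨hwX', hwgt⟩
          exact hInv S hSX hScard y z (hgood y hy) (hgood z hz)
  obtain ⟨X, A, hXcard, _, _, hInv⟩ := key (M+1) le_rfl
  exact ⟨X, hXcard, fun S hS hScard y hyX hygt z hzX hzgt =>
    hInv S hS hScard y z (Or.inr ⟨hyX, hygt⟩) (Or.inr ⟨hzX, hzgt⟩)⟩

set_option maxHeartbeats 2000000 in
/-- **Induction step (recurrence (1)) in the proof of Theorem 1.4**: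
if every transitive 2-coloring of the `k`-element subsets of `{1, …, M}` admits an `n`-element
homogeneous subset, then every transitive 2-coloring of the `(k+1)`-element subsets of
`{1, …, N}` with `N = 2^{M^k}` admits an `n`-element homogeneous subset. -/
theorem stmt9 (k n M : ℕ) (hk : 3 ≤ k) (hn : 1 ≤ n) (hM : 0 < M)
    (h : ∀ c : Finset (Fin M) → Bool, IsTransitive k c → HasHomog k n c) :
    ∀ c : Finset (Fin (2 ^ M ^ k)) → Bool,
      IsTransitive (k + 1) c → HasHomog (k + 1) n c := by
  intro c hc
  obtain ⟨X, hXcard, hEH⟩ := exists_endhomog k M hk c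
  obtain ⟨e, he⟩ : ∃ e : Fin (M+1) ↪o Fin (2 ^ M ^ k), e = X.orderEmbOfFin hXcard := ⟨_, rfl⟩
  have hemem : ∀ j : Fin (M+1), e j ∈ X := fun j => by
    rw [he]; exact X.orderEmbOfFin_mem hXcard j
  have hmono : StrictMono e := e.strictMono
  obtain ⟨emb, hemb⟩ : ∃ emb : Fin M → Fin (2 ^ M ^ k),
      emb = fun a => e a.castSucc := ⟨_, rfl⟩
  have hembmono : StrictMono emb := by
    rw [hemb]; exact fun a b hab => hmono (by simpa using hab)
  have hembinj : Function.Injective emb := hembmono.injective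
  have hembmem : ∀ a, emb a ∈ X := fun a => by rw [hemb]; exact hemem _
  obtain ⟨top, htop⟩ : ∃ top, top = e (Fin.last M) := ⟨_, rfl⟩
  have htopmem : top ∈ X := htop ▸ hemem _
  have hlt_top : ∀ a : Fin M, emb a < top := fun a => by
    rw [hemb, htop]; exact hmono (Fin.castSucc_lt_last a)
  obtain ⟨c', hc'def⟩ : ∃ c' : Finset (Fin M) → Bool,
      c' = fun S => c (insert top (S.image emb)) := ⟨_, rfl⟩
  -- end-homogeneity in convenient form
  have EH2 : ∀ (U : Finset (Fin M)) (a : Fin M), U.card = k + 1 → a ∈ U → (∀ u ∈ U, u ≤ a) →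
      c (U.image emb) = c (insert top ((U.erase a).image emb)) := by
    intro U a hUcard haU hmax
    have hScard : ((U.erase a).image emb).card = k := by
      rw [Finset.card_image_of_injective _ hembinj, Finset.card_erase_of_mem haU, hUcard]
      rfl
    have hSsub : (U.erase a).image emb ⊆ X := by
      intro s hs; obtain ⟨u, _, rfl⟩ := Finset.mem_image.mp hs; exact hembmem u
    have hgt_a : ∀ s ∈ (U.erase a).image emb, s < emb a := by
      intro s hs; obtain ⟨u, hu, rfl⟩ := Finset.mem_image.mp hs
      exact hembmono (lt_of_le_of_ne (hmax u (Finset.mem_of_mem_erase hu))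
        (Finset.ne_of_mem_erase hu))
    have hgt_top : ∀ s ∈ (U.erase a).image emb, s < top := by
      intro s hs; obtain ⟨u, _, rfl⟩ := Finset.mem_image.mp hs; exact hlt_top u
    have hstep := hEH ((U.erase a).image emb) hSsub hScard (emb a) (hembmem a) hgt_a
      top htopmem hgt_top
    rw [← hstep, ← Finset.image_insert, Finset.insert_erase haU]
  -- commuting erase with the embedding
  have hErase : ∀ (U : Finset (Fin M)) (a : Fin M), a ∈ U →
      (insert top (U.image emb)).erase (emb a) = insert top ((U.erase a).image emb) := by
    intro U a haU
    rw [Finset.erase_insert_of_ne (hlt_top a).ne', Finset.image_erase hembinj]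
  have htopnotim : ∀ U : Finset (Fin M), top ∉ U.image emb := by
    intro U hmem
    obtain ⟨u, _, hu⟩ := Finset.mem_image.mp hmem
    exact absurd hu (hlt_top u).ne
  -- transitivity of the induced coloring
  have hc' : IsTransitive k c' := by
    intro U hUcard hUne hhyp a haU
    have hVcard : (U.image emb).card = k + 1 := by
      rw [Finset.card_image_of_injective _ hembinj, hUcard]
    have hWcard : (insert top (U.image emb)).card = (k + 1) + 1 := by
      rw [Finset.card_insert_of_notMem (htopnotim U), hVcard]
    have hWne : (insert top (U.image emb)).Nonempty := ⟨top, Finset.mem_insert_self _ _⟩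
    have hWmax : (insert top (U.image emb)).max' hWne = top := by
      apply le_antisymm
      · apply Finset.max'_le
        intro w hw
        rcases Finset.mem_insert.mp hw with h | hw
        · exact le_of_eq h
        · obtain ⟨u, _, rfl⟩ := Finset.mem_image.mp hw; exact (hlt_top u).le
      · exact Finset.le_max' _ _ (Finset.mem_insert_self _ _)
    have hWmin : (insert top (U.image emb)).min' hWne = emb (U.min' hUne) := by
      apply le_antisymm
      · exact Finset.min'_le _ _ (Finset.mem_insert.mpr
          (Or.inr (Finset.mem_image_of_mem emb (U.min'_mem hUne))))
      · apply Finset.le_min'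
        intro w hw
        rcases Finset.mem_insert.mp hw with h | hw
        · rw [h]; exact (hlt_top _).le
        · obtain ⟨u, hu, rfl⟩ := Finset.mem_image.mp hw
          exact hembmono.monotone (U.min'_le u hu)
    have hkeyeq : ∀ a ∈ U, c' (U.erase a) = c ((insert top (U.image emb)).erase (emb a)) := by
      intro a haU
      rw [hc'def, hErase U a haU]
    have hWtop : (insert top (U.image emb)).erase top = U.image emb :=
      Finset.erase_insert (htopnotim U)
    have hmaxU : U.max' hUne ∈ U := U.max'_mem hUne
    have hminU : U.min' hUne ∈ U := U.min'_mem hUne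
    have hVmax : c (U.image emb) = c ((insert top (U.image emb)).erase (emb (U.max' hUne))) := by
      rw [hErase U _ hmaxU]
      exact EH2 U (U.max' hUne) hUcard hmaxU (fun u hu => U.le_max' u hu)
    have hstep : c ((insert top (U.image emb)).erase ((insert top (U.image emb)).max' hWne))
        = c ((insert top (U.image emb)).erase ((insert top (U.image emb)).min' hWne)) := by
      rw [hWmax, hWmin, hWtop, hVmax, ← hkeyeq _ hmaxU, hhyp, hkeyeq _ hminU]
    have htr := hc (insert top (U.image emb)) hWcard hWne hstep (emb a)
      (Finset.mem_insert.mpr (Or.inr (Finset.mem_image_of_mem emb haU)))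
    rw [hkeyeq a haU, hkeyeq _ hminU, ← hWmin]
    exact htr
  -- transfer the homogeneous set
  obtain ⟨S₀, hS₀card, col, hcol⟩ := h c' hc'
  refine ⟨S₀.image emb, by rw [Finset.card_image_of_injective _ hembinj, hS₀card], col, ?_⟩
  intro T hT hTcard
  obtain ⟨U, hUsub, rfl⟩ := Finset.subset_image_iff.mp hT
  have hUcard : U.card = k + 1 := by
    rwa [Finset.card_image_of_injective _ hembinj] at hTcard
  have hUne : U.Nonempty := Finset.card_pos.mp (by omega)
  have hmaxU : U.max' hUne ∈ U := U.max'_mem hUne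
  have hcolU : c' (U.erase (U.max' hUne)) = col := by
    apply hcol _ ((Finset.erase_subset _ _).trans hUsub)
    rw [Finset.card_erase_of_mem hmaxU, hUcard]
    rfl
  rw [hc'def] at hcolU
  exact (EH2 U (U.max' hUne) hUcard hmaxU (fun u hu => U.le_max' u hu)).trans hcolU
end

section
/- For every fixed k ≥ 3 there exists a constant C (depending only on k) such that for all n ≥ 1, every transitive 2-coloring of the (k+1)-element subsets of {1, …, twr_k(C·n)} admits an n-element homogeneous subset; i.e., the Ramsey number for transitive 2-colorings of (k+1)-tuples is at most twr_k(O(n)). -/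
/-- The tower function: `twr 1 x = x` and `twr (i+1) x = 2 ^ twr i x`. -/
def twr : ℕ → ℕ → ℕ
  | 0, x => x
  | 1, x => x
  | n + 2, x => 2 ^ twr (n + 1) x

open Finset

namespace Stmt10

variable {N : ℕ}

/-- `W` is an interval ("consecutive set") of `S`. -/
def Consec (S W : Finset (Fin N)) : Prop :=
  ∀ a ∈ W, ∀ b ∈ W, ∀ s ∈ S, a ≤ s → s ≤ b → s ∈ W

lemma consec_self (S : Finset (Fin N)) : Consec S S := fun _ _ _ _ s hs _ _ => hs

lemma consec_shrink {S S' W : Finset (Fin N)} (hS : S' ⊆ S) (h : Consec S W) :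
    Consec S' W := fun a ha b hb s hs => h a ha b hb s (hS hs)

lemma consec_lift_erase_max {S W : Finset (Fin N)} (h : S.Nonempty)
    (hW : W ⊆ S.erase (S.max' h)) (hc : Consec (S.erase (S.max' h)) W) : Consec S W := by
  intro a ha b hb s hs has hsb
  have hbe := hW hb
  have hblt : b < S.max' h :=
    lt_of_le_of_ne (S.le_max' b (Finset.mem_of_mem_erase hbe)) (Finset.mem_erase.1 hbe).1
  exact hc a ha b hb s (Finset.mem_erase.2 ⟨ne_of_lt (lt_of_le_of_lt hsb hblt), hs⟩) has hsb

lemma consec_lift_erase_min {S W : Finset (Fin N)} (h : S.Nonempty)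
    (hW : W ⊆ S.erase (S.min' h)) (hc : Consec (S.erase (S.min' h)) W) : Consec S W := by
  intro a ha b hb s hs has hsb
  have hae := hW ha
  have halt : S.min' h < a :=
    lt_of_le_of_ne (S.min'_le a (Finset.mem_of_mem_erase hae)) (Ne.symm (Finset.mem_erase.1 hae).1)
  exact hc a ha b hb s (Finset.mem_erase.2 ⟨(ne_of_lt (lt_of_lt_of_le halt has)).symm, hs⟩) has hsb

lemma consec_erase_max {S W : Finset (Fin N)} (hW : Consec S W) (hne : W.Nonempty) :
    Consec S (W.erase (W.max' hne)) := by
  intro a ha b hb s hs has hsb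
  have hb' := Finset.mem_of_mem_erase hb
  have hblt : b < W.max' hne := lt_of_le_of_ne (W.le_max' b hb') (Finset.mem_erase.1 hb).1
  have hsW : s ∈ W := hW a (Finset.mem_of_mem_erase ha) b hb' s hs has hsb
  exact Finset.mem_erase.2 ⟨ne_of_lt (lt_of_le_of_lt hsb hblt), hsW⟩

lemma consec_erase_min {S W : Finset (Fin N)} (hW : Consec S W) (hne : W.Nonempty) :
    Consec S (W.erase (W.min' hne)) := by
  intro a ha b hb s hs has hsb
  have ha' := Finset.mem_of_mem_erase ha
  have halt : W.min' hne < a := lt_of_le_of_ne (W.min'_le a ha') (Ne.symm (Finset.mem_erase.1 ha).1)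
  have hsW : s ∈ W := hW a ha' b (Finset.mem_of_mem_erase hb) s hs has hsb
  exact Finset.mem_erase.2 ⟨(ne_of_lt (lt_of_lt_of_le halt has)).symm, hsW⟩

/-- Transitivity upgrades "all consecutive `ℓ`-windows have color `col`" to full homogeneity. -/
lemma lemA {ℓ : ℕ} (hl : 1 ≤ ℓ) {c : Finset (Fin N) → Bool}
    (hc : IsTransitive ℓ c) (col : Bool) :
    ∀ S : Finset (Fin N),
      (∀ W ⊆ S, W.card = ℓ → Consec S W → c W = col) →
      ∀ T ⊆ S, T.card = ℓ → c T = col := by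
  intro S
  induction S using Finset.strongInduction with
  | _ S IH =>
    intro hS T hTS hT
    have hTne : T.Nonempty := Finset.card_pos.1 (by omega)
    have hSne : S.Nonempty := ⟨hTne.choose, hTS hTne.choose_spec⟩
    have hMS := S.max'_mem hSne
    have hmS := S.min'_mem hSne
    have hcard : ℓ ≤ S.card := hT ▸ Finset.card_le_card hTS
    by_cases hMT : S.max' hSne ∈ T
    · by_cases hmT : S.min' hSne ∈ T
      · rcases Nat.lt_or_ge S.card (ℓ + 1) with hlt | hge
        · -- S.card = ℓ : T = S
          have hTSeq : T = S := Finset.eq_of_subset_of_card_le hTS (by omega)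
          subst hTSeq
          exact hS T Finset.Subset.rfl hT (consec_self T)
        · rcases Nat.lt_or_ge S.card (ℓ + 2) with hlt2 | hge2
          · -- S.card = ℓ + 1
            have hScard : S.card = ℓ + 1 := by omega
            have h1 : c (S.erase (S.max' hSne)) = col :=
              hS _ (Finset.erase_subset _ _)
                (by rw [Finset.card_erase_of_mem hMS, hScard]; omega) (consec_erase_max (consec_self S) hSne)
            have h2 : c (S.erase (S.min' hSne)) = col :=
              hS _ (Finset.erase_subset _ _)
                (by rw [Finset.card_erase_of_mem hmS, hScard]; omega) (consec_erase_min (consec_self S) hSne)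
            have key := hc S hScard hSne (by rw [h1, h2])
            have hsd : (S \ T).card = 1 := by rw [Finset.card_sdiff_of_subset hTS]; omega
            obtain ⟨a, ha⟩ := Finset.card_eq_one.1 hsd
            have haST : a ∈ S \ T := ha ▸ Finset.mem_singleton_self a
            have haS : a ∈ S := (Finset.mem_sdiff.1 haST).1
            have haT : a ∉ T := (Finset.mem_sdiff.1 haST).2
            have hTa : T = S.erase a := by
              apply Finset.eq_of_subset_of_card_le
              · intro t ht
                exact Finset.mem_erase.2 ⟨fun he => haT (he ▸ ht), hTS ht⟩
              · rw [Finset.card_erase_of_mem haS, hScard, hT]; omega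
            rw [hTa, key a haS]
            exact h2
          · -- S.card ≥ ℓ + 2
            have hdiff : (S \ T).Nonempty := Finset.card_pos.1 (by rw [Finset.card_sdiff_of_subset hTS]; omega)
            obtain ⟨u, hu⟩ := hdiff
            have huS : u ∈ S := (Finset.mem_sdiff.1 hu).1
            have huT : u ∉ T := (Finset.mem_sdiff.1 hu).2
            set T' := insert u T with hT'def
            have hT'c : T'.card = ℓ + 1 := by
              rw [hT'def, Finset.card_insert_of_notMem huT, hT]
            have hT'S : T' ⊆ S := Finset.insert_subset huS hTS
            have hT'ne : T'.Nonempty := Finset.insert_nonempty _ _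
            have hmax : T'.max' hT'ne = S.max' hSne :=
              le_antisymm (S.le_max' _ (hT'S (T'.max'_mem hT'ne)))
                (T'.le_max' _ (Finset.mem_insert_of_mem hMT))
            have hmin : T'.min' hT'ne = S.min' hSne :=
              le_antisymm (T'.min'_le _ (Finset.mem_insert_of_mem hmT))
                (S.min'_le _ (hT'S (T'.min'_mem hT'ne)))
            have h1 : c (T'.erase (S.max' hSne)) = col := by
              refine IH _ (Finset.erase_ssubset hMS) ?_ _ ?_ ?_
              · intro W hW hWc hWcon
                exact hS W (hW.trans (Finset.erase_subset _ _)) hWc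
                  (consec_lift_erase_max hSne hW hWcon)
              · intro t ht
                rcases Finset.mem_erase.1 ht with ⟨htne, htT'⟩
                exact Finset.mem_erase.2 ⟨htne, hT'S htT'⟩
              · rw [Finset.card_erase_of_mem (Finset.mem_insert_of_mem hMT), hT'c]; omega
            have h2 : c (T'.erase (S.min' hSne)) = col := by
              refine IH _ (Finset.erase_ssubset hmS) ?_ _ ?_ ?_
              · intro W hW hWc hWcon
                exact hS W (hW.trans (Finset.erase_subset _ _)) hWc
                  (consec_lift_erase_min hSne hW hWcon)
              · intro t ht
                rcases Finset.mem_erase.1 ht with ⟨htne, htT'⟩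
                exact Finset.mem_erase.2 ⟨htne, hT'S htT'⟩
              · rw [Finset.card_erase_of_mem (Finset.mem_insert_of_mem hmT), hT'c]; omega
            have key := hc T' hT'c hT'ne (by rw [hmax, hmin, h1, h2])
            have hTu : T'.erase u = T := Finset.erase_insert huT
            have := key u (Finset.mem_insert_self u T)
            rw [hTu, hmin, h2] at this
            exact this
      · -- min ∉ T : recurse on S.erase min
        have hss : S.erase (S.min' hSne) ⊂ S := Finset.erase_ssubset hmS
        refine IH _ hss ?_ T ?_ hT
        · intro W hW hWc hWcon
          exact hS W (hW.trans (Finset.erase_subset _ _)) hWc (consec_lift_erase_min hSne hW hWcon)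
        · intro t ht
          exact Finset.mem_erase.2 ⟨fun he => hmT (he ▸ ht), hTS ht⟩
    · -- max ∉ T
      have hss : S.erase (S.max' hSne) ⊂ S := Finset.erase_ssubset hMS
      refine IH _ hss ?_ T ?_ hT
      · intro W hW hWc hWcon
        exact hS W (hW.trans (Finset.erase_subset _ _)) hWc (consec_lift_erase_max hSne hW hWcon)
      · intro t ht
        exact Finset.mem_erase.2 ⟨fun he => hMT (he ▸ ht), hTS ht⟩


open scoped Classical in
/-- An up-closed subset of `Fin n` is a suffix determined by its cardinality. -/
lemma upclosed_mem_iff {n : ℕ} (A : Finset (Fin n))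
    (hA : ∀ a ∈ A, ∀ b : Fin n, a ≤ b → b ∈ A) (a : Fin n) :
    a ∈ A ↔ n - A.card ≤ a.val := by
  rcases A.eq_empty_or_nonempty with h | h
  · subst h
    simp only [Finset.notMem_empty, Finset.card_empty, Nat.sub_zero, false_iff, not_le]
    exact a.isLt
  · set t := A.min' h with ht
    have hAt : A = Finset.Ici t := by
      ext x
      simp only [Finset.mem_Ici]
      exact ⟨fun hx => A.min'_le x hx, fun hx => hA _ (A.min'_mem h) x hx⟩
    have hlt : t.val < n := t.isLt
    rw [hAt, Finset.mem_Ici, Fin.card_Ici, Fin.le_def]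
    omega

open scoped Classical in
noncomputable def rowc {n : ℕ} (R : Finset (Fin n × Fin n)) (b : Fin n) : ℕ :=
  (Finset.univ.filter (fun a : Fin n => (a, b) ∈ R)).card

open scoped Classical in
lemma rowc_le {n : ℕ} (R : Finset (Fin n × Fin n)) (b : Fin n) : rowc R b ≤ n := by
  have := Finset.card_filter_le Finset.univ (fun a : Fin n => (a, b) ∈ R)
  simpa [rowc] using this

def UpSet {n : ℕ} (R : Finset (Fin n × Fin n)) : Prop :=
  ∀ x ∈ R, ∀ y : Fin n × Fin n, x.1 ≤ y.1 → x.2 ≤ y.2 → y ∈ R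

open scoped Classical in
lemma rowc_mono {n : ℕ} (R : Finset (Fin n × Fin n)) (hR : UpSet R) :
    Monotone (rowc R) := by
  intro b b' hbb
  apply Finset.card_le_card
  intro a ha
  simp only [Finset.mem_filter, Finset.mem_univ, true_and] at ha ⊢
  exact hR _ ha (a, b') le_rfl hbb

open scoped Classical in
lemma theta_strictMono {n : ℕ} (R : Finset (Fin n × Fin n)) (hR : UpSet R) :
    StrictMono (fun b : Fin n => rowc R b + b.val) := by
  intro b b' hbb
  have h1 := rowc_mono R hR (le_of_lt hbb)
  have h2 : b.val < b'.val := hbb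
  show rowc R b + b.val < rowc R b' + b'.val
  omega

open scoped Classical in
lemma theta_inj {n : ℕ} (R R' : Finset (Fin n × Fin n)) (hR : UpSet R) (hR' : UpSet R')
    (h : Finset.image (fun b : Fin n => rowc R b + b.val) Finset.univ
       = Finset.image (fun b : Fin n => rowc R' b + b.val) Finset.univ) : R = R' := by
  set f := fun b : Fin n => rowc R b + b.val with hf
  set g := fun b : Fin n => rowc R' b + b.val with hg
  have hfs : StrictMono f := theta_strictMono R hR
  have hgs : StrictMono g := theta_strictMono R' hR'
  have hcard : (Finset.image f Finset.univ).card = n := by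
    rw [Finset.card_image_of_injective _ hfs.injective, Finset.card_univ, Fintype.card_fin]
  have hfe : f = (Finset.image f Finset.univ).orderEmbOfFin hcard :=
    Finset.orderEmbOfFin_unique hcard (fun x => Finset.mem_image_of_mem f (Finset.mem_univ x)) hfs
  have hge : g = (Finset.image f Finset.univ).orderEmbOfFin hcard := by
    refine Finset.orderEmbOfFin_unique hcard (fun x => ?_) hgs
    rw [h]
    exact Finset.mem_image_of_mem g (Finset.mem_univ x)
  have hfg : ∀ b, rowc R b = rowc R' b := by
    intro b
    have : f b = g b := by rw [hfe, hge]
    simpa [hf, hg] using this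
  ext x
  have hrow : ∀ (Q : Finset (Fin n × Fin n)), UpSet Q →
      (x ∈ Q ↔ n - rowc Q x.2 ≤ x.1.val) := by
    intro Q hQ
    have := upclosed_mem_iff (Finset.univ.filter (fun a : Fin n => (a, x.2) ∈ Q))
      (by
        intro a ha b hab
        simp only [Finset.mem_filter, Finset.mem_univ, true_and] at ha ⊢
        exact hQ _ ha (b, x.2) hab le_rfl) x.1
    simp only [Finset.mem_filter, Finset.mem_univ, true_and] at this
    rw [show ((x.1, x.2) : Fin n × Fin n) = x from rfl] at this
    exact this.trans (by rw [rowc])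
  rw [hrow R hR, hrow R' hR', hfg]


open scoped Classical in
/-- Base case: monochromatic tight 3-uniform monotone path. -/
lemma base {N : ℕ} (n : ℕ) (c : Finset (Fin N) → Bool) (G : Finset (Fin N))
    (hG : 2 ^ (2 * n) + 2 ≤ G.card) :
    ∃ col : Bool, ∃ S : Finset (Fin N), S ⊆ G ∧ n ≤ S.card ∧
      ∀ W ⊆ S, W.card = 3 → Consec S W → c W = col := by
  rcases Nat.eq_zero_or_pos n with rfl | hn
  · refine ⟨true, ∅, Finset.empty_subset G, le_refl 0, ?_⟩
    intro W hW hWc hWcon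
    have : W = ∅ := Finset.subset_empty.1 hW
    rw [this] at hWc
    simp at hWc
  by_contra hcon
  push_neg at hcon
  have key : ∀ (col : Bool) (S : Finset (Fin N)), S ⊆ G →
      (∀ W ⊆ S, W.card = 3 → Consec S W → c W = col) → S.card < n := by
    intro col S hSG hP
    by_contra hle
    push_neg at hle
    obtain ⟨W, hW1, hW2, hW3⟩ := hcon col S hSG hle
    exact hW3.2 (hP W hW1 hW2 hW3.1)
  set cands : Bool → Fin N → Fin N → Finset (Finset (Fin N)) := fun col u v =>
    G.powerset.filter (fun S => (∀ W ⊆ S, W.card = 3 → Consec S W → c W = col) ∧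
      u ∈ S ∧ v ∈ S ∧ (∀ s ∈ S, s ≤ v) ∧ (∀ s ∈ S, s ≠ v → s ≤ u)) with hcands
  set L : Bool → Fin N → Fin N → ℕ := fun col u v => (cands col u v).sup Finset.card with hL
  have mem0 : ∀ (col : Bool) (u v : Fin N), u ∈ G → v ∈ G → u < v →
      ({u, v} : Finset (Fin N)) ∈ cands col u v := by
    intro col u v hu hv huv
    rw [hcands]
    refine Finset.mem_filter.2 ⟨Finset.mem_powerset.2 ?_, ?_, ?_, ?_, ?_, ?_⟩
    · exact Finset.insert_subset hu (Finset.singleton_subset_iff.2 hv)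
    · intro W hW hWc hWcon
      have h1 := Finset.card_le_card hW
      have h2 : ({u, v} : Finset (Fin N)).card ≤ 2 :=
        (Finset.card_insert_le u {v}).trans (by simp)
      rw [hWc] at h1
      omega
    · simp
    · simp
    · intro s hs
      rcases Finset.mem_insert.1 hs with rfl | hs
      · exact le_of_lt huv
      · rw [Finset.mem_singleton.1 hs]
    · intro s hs hne
      rcases Finset.mem_insert.1 hs with rfl | hs
      · exact le_refl s
      · exact absurd (Finset.mem_singleton.1 hs) hne
  have cands_spec : ∀ (col : Bool) (u v : Fin N) (S : Finset (Fin N)), S ∈ cands col u v →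
      S ⊆ G ∧ (∀ W ⊆ S, W.card = 3 → Consec S W → c W = col) ∧
      u ∈ S ∧ v ∈ S ∧ (∀ s ∈ S, s ≤ v) ∧ (∀ s ∈ S, s ≠ v → s ≤ u) := by
    intro col u v S hS
    rw [hcands] at hS
    have h1 := Finset.mem_filter.1 hS
    exact ⟨Finset.mem_powerset.1 h1.1, h1.2.1, h1.2.2.1, h1.2.2.2.1, h1.2.2.2.2.1, h1.2.2.2.2.2⟩
  have Llt : ∀ (col : Bool) (u v : Fin N), L col u v < n := by
    intro col u v
    rw [hL]
    have hb : (⊥ : ℕ) < n := hn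
    rw [Finset.sup_lt_iff hb]
    intro S hS
    obtain ⟨h1, h2, _⟩ := cands_spec col u v S hS
    exact key col S h1 h2
  have step : ∀ (col : Bool) (u v w : Fin N), u ∈ G → v ∈ G → w ∈ G → u < v → v < w →
      c {u, v, w} = col → L col u v < L col v w := by
    intro col u v w hu hv hw huv hvw hc3
    obtain ⟨S₀, hS₀mem, hS₀⟩ :=
      Finset.exists_mem_eq_sup (cands col u v) ⟨{u, v}, mem0 col u v hu hv huv⟩ Finset.card
    obtain ⟨hS₀G, hwin, huS, hvS, hbdv, hbdu⟩ := cands_spec col u v S₀ hS₀mem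
    have hwS₀ : w ∉ S₀ := fun h => absurd (hbdv w h) (not_le.2 hvw)
    set S' := insert w S₀ with hS'
    have hS'cands : S' ∈ cands col v w := by
      rw [hcands]
      refine Finset.mem_filter.2 ⟨Finset.mem_powerset.2
        (Finset.insert_subset hw hS₀G), ?_, Finset.mem_insert_of_mem hvS,
        Finset.mem_insert_self _ _, ?_, ?_⟩
      · intro W hW hWc hWcon
        by_cases hwW : w ∈ W
        · -- W must be {u, v, w}
          have hW' : W.erase w ⊆ S₀ := by
            intro t ht
            rcases Finset.mem_erase.1 ht with ⟨htw, htW⟩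
            exact (Finset.mem_insert.1 (hW htW)).resolve_left htw
          have hWe : (W.erase w).card = 2 := by
            rw [Finset.card_erase_of_mem hwW, hWc]
          have hWene : (W.erase w).Nonempty := Finset.card_pos.1 (by omega)
          set a := (W.erase w).min' hWene with hadef
          set b := (W.erase w).max' hWene with hbdef
          have hab : a < b := Finset.min'_lt_max'_of_card _ (by omega)
          have haW' : a ∈ W.erase w := Finset.min'_mem _ _
          have hbW' : b ∈ W.erase w := Finset.max'_mem _ _
          have haW : a ∈ W := Finset.mem_of_mem_erase haW'
          have hbW : b ∈ W := Finset.mem_of_mem_erase hbW'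
          have haS₀ : a ∈ S₀ := hW' haW'
          have hbS₀ : b ∈ S₀ := hW' hbW'
          have hbv : b = v := by
            by_contra hbv
            have hbltv : b < v := lt_of_le_of_ne (hbdv b hbS₀) hbv
            have hvW : v ∈ W := hWcon a haW w hwW v (Finset.mem_insert_of_mem hvS)
              (le_trans (hbdv a haS₀) (le_refl v)) (le_of_lt hvw)
            have hvW' : v ∈ W.erase w := Finset.mem_erase.2 ⟨ne_of_lt hvw, hvW⟩
            exact absurd (Finset.le_max' _ v hvW') (not_le.2 hbltv)
          have hWer : W.erase w = {a, b} := by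
            apply (Finset.eq_of_subset_of_card_le ?_ ?_).symm
            · intro t ht
              rcases Finset.mem_insert.1 ht with rfl | ht
              · exact haW'
              · rw [Finset.mem_singleton.1 ht]; exact hbW'
            · rw [hWe, Finset.card_insert_of_notMem (by simp [Finset.mem_singleton, ne_of_lt hab]),
                Finset.card_singleton]
          have hau : a = u := by
            by_contra hau
            have haltu : a < u := by
              have : a ≤ u := hbdu a haS₀ (by rw [hbv] at hab; exact ne_of_lt hab)
              exact lt_of_le_of_ne this hau
            have huW : u ∈ W := hWcon a haW b hbW u (Finset.mem_insert_of_mem huS)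
              (le_of_lt haltu) (by rw [hbv]; exact le_of_lt huv)
            have huW' : u ∈ W.erase w := Finset.mem_erase.2
              ⟨ne_of_lt (lt_trans huv hvw), huW⟩
            rw [hWer] at huW'
            rcases Finset.mem_insert.1 huW' with rfl | h
            · exact hau rfl
            · rw [Finset.mem_singleton.1 h, hbv] at huv
              exact lt_irrefl v huv
          have hWuvw : W = {u, v, w} := by
            have h1 : W = insert w (W.erase w) := (Finset.insert_erase hwW).symm
            rw [h1, hWer, hau, hbv]
            ext t
            simp only [Finset.mem_insert, Finset.mem_singleton]
            tauto
          rw [hWuvw]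
          exact hc3
        · have hWS₀ : W ⊆ S₀ := fun t ht =>
            (Finset.mem_insert.1 (hW ht)).resolve_left (fun h => hwW (h ▸ ht))
          exact hwin W hWS₀ hWc (consec_shrink (Finset.subset_insert w S₀) hWcon)
      · intro s hs
        rcases Finset.mem_insert.1 hs with rfl | hs
        · exact le_refl s
        · exact le_trans (hbdv s hs) (le_of_lt hvw)
      · intro s hs hne
        rcases Finset.mem_insert.1 hs with rfl | hs
        · exact absurd rfl hne
        · exact hbdv s hs
    have hle : S'.card ≤ L col v w := Finset.le_sup hS'cands
    rw [hS', Finset.card_insert_of_notMem hwS₀] at hle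
    have hLuv : L col u v = S₀.card := hS₀
    omega
  -- the labelling map
  set F : Fin N → Finset (Fin n × Fin n) := fun v =>
    Finset.univ.filter (fun x : Fin n × Fin n =>
      ∃ w ∈ G, v < w ∧ L true v w ≤ x.1.val ∧ L false v w ≤ x.2.val) with hF
  have Fup : ∀ v, UpSet (F v) := by
    intro v x hx y h1 h2
    rw [hF] at hx ⊢
    obtain ⟨w, hw, hvw, hr, hb⟩ := (Finset.mem_filter.1 hx).2
    exact Finset.mem_filter.2 ⟨Finset.mem_univ _, ⟨w, hw, hvw, le_trans hr h1, le_trans hb h2⟩⟩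
  have Finj : ∀ u ∈ G, ∀ v ∈ G, u < v → F u ≠ F v := by
    intro u hu v hv huv heq
    have h1 : ((⟨L true u v, Llt true u v⟩, ⟨L false u v, Llt false u v⟩) : Fin n × Fin n) ∈ F u := by
      rw [hF]
      exact Finset.mem_filter.2 ⟨Finset.mem_univ _, ⟨v, hv, huv, le_refl _, le_refl _⟩⟩
    rw [heq, hF] at h1
    obtain ⟨w, hw, hvw, hR, hB⟩ := (Finset.mem_filter.1 h1).2
    cases hcw : c {u, v, w} with
    | false => exact absurd hB (not_le.2 (step false u v w hu hv hw huv hvw hcw))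
    | true => exact absurd hR (not_le.2 (step true u v w hu hv hw huv hvw hcw))
  have hcount : G.card ≤ 2 ^ (2 * n) := by
    have hmaps : ∀ v ∈ G, Finset.image (fun b : Fin n => rowc (F v) b + b.val) Finset.univ
        ∈ (Finset.range (2 * n)).powerset := by
      intro v _
      rw [Finset.mem_powerset]
      intro t ht
      obtain ⟨b, _, hb⟩ := Finset.mem_image.1 ht
      have h1 := rowc_le (F v) b
      have h2 := b.isLt
      rw [Finset.mem_range]
      omega
    have hinj : Set.InjOn (fun v => Finset.image
        (fun b : Fin n => rowc (F v) b + b.val) Finset.univ) ↑G := by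
      intro u hu v hv heq
      by_contra hne
      have hFuv : F u = F v := theta_inj (F u) (F v) (Fup u) (Fup v) heq
      rcases lt_trichotomy u v with h | h | h
      · exact Finj u hu v hv h hFuv
      · exact hne h
      · exact Finj v hv u hu h hFuv.symm
    have := Finset.card_le_card_of_injOn _ hmaps hinj
    rwa [Finset.card_powerset, Finset.card_range] at this
  omega


/-- recursion bookkeeping for the end-homogenization -/
def beta (w : ℕ) : ℕ → ℕ → ℕ
  | _, 0 => 0
  | p, m + 1 => 1 + 2 ^ ((p + 1) ^ w) * beta w (p + 1) m

def AllLt {N : ℕ} (P C : Finset (Fin N)) : Prop := ∀ a ∈ P, ∀ b ∈ C, a < b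

def InvS {N : ℕ} (w : ℕ) (c : Finset (Fin N) → Bool) (P C : Finset (Fin N)) : Prop :=
  ∀ S ⊆ P, S.card = w → ∀ y z : Fin N,
    (y ∈ C ∨ (y ∈ P ∧ ∀ s ∈ S, s < y)) →
    (z ∈ C ∨ (z ∈ P ∧ ∀ s ∈ S, s < z)) →
    c (insert y S) = c (insert z S)

def Inv2 {N : ℕ} (w : ℕ) (c : Finset (Fin N) → Bool) (X : Finset (Fin N)) : Prop :=
  ∀ S ⊆ X, S.card = w → ∀ y ∈ X, ∀ z ∈ X, (∀ s ∈ S, s < y) → (∀ s ∈ S, s < z) →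
    c (insert y S) = c (insert z S)

open scoped Classical in
lemma EHrec {N : ℕ} (w : ℕ) (c : Finset (Fin N) → Bool) :
    ∀ (m : ℕ) (P C : Finset (Fin N)),
    AllLt P C → InvS w c P C → beta w P.card m ≤ C.card →
    ∃ X ⊆ C, m ≤ X.card ∧ Inv2 w c (P ∪ X) := by
  intro m
  induction m with
  | zero =>
    intro P C hlt hinv _
    refine ⟨∅, Finset.empty_subset _, Nat.zero_le _, ?_⟩
    rw [Finset.union_empty]
    intro S hS hSc y hy z hz hys hzs
    exact hinv S hS hSc y z (Or.inr ⟨hy, hys⟩) (Or.inr ⟨hz, hzs⟩)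
  | succ m IH =>
    intro P C hlt hinv hcard
    have hbeta : beta w P.card (m + 1) = 1 + 2 ^ ((P.card + 1) ^ w) * beta w (P.card + 1) m := rfl
    have hCne : C.Nonempty := Finset.card_pos.1 (by omega)
    set x := C.min' hCne with hxdef
    have hxC : x ∈ C := C.min'_mem hCne
    have hxP : x ∉ P := fun h => lt_irrefl x (hlt x h x hxC)
    set T := Finset.powersetCard w (insert x P) with hT
    set κ : Fin N → (↥T → Bool) := fun y S => c (insert y S.val) with hκ
    have htcard : (Finset.univ : Finset (↥T → Bool)).card ≤ 2 ^ ((P.card + 1) ^ w) := by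
      rw [Finset.card_univ, Fintype.card_fun, Fintype.card_coe, Fintype.card_bool, hT,
        Finset.card_powersetCard, Finset.card_insert_of_notMem hxP]
      exact Nat.pow_le_pow_right (by norm_num) (Nat.choose_le_pow _ _)
    obtain ⟨t₀, _, hfib⟩ := Finset.exists_le_card_fiber_of_mul_le_card_of_maps_to
      (s := C.erase x) (t := (Finset.univ : Finset (↥T → Bool))) (f := κ)
      (n := beta w (P.card + 1) m)
      (fun a _ => Finset.mem_univ _) Finset.univ_nonempty
      (by
        rw [Finset.card_erase_of_mem hxC]
        calc (Finset.univ : Finset (↥T → Bool)).card * beta w (P.card + 1) m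
            ≤ 2 ^ ((P.card + 1) ^ w) * beta w (P.card + 1) m :=
              Nat.mul_le_mul_right _ htcard
          _ ≤ C.card - 1 := by omega)
    set C' := (C.erase x).filter (fun y => κ y = t₀) with hC'
    have hC'C : C' ⊆ C := (Finset.filter_subset _ _).trans (Finset.erase_subset _ _)
    have hxlt : ∀ b ∈ C', x < b := by
      intro b hb
      have hb' := Finset.mem_of_mem_filter b hb
      exact lt_of_le_of_ne (C.min'_le b (Finset.mem_of_mem_erase hb'))
        (Ne.symm (Finset.mem_erase.1 hb').1)
    have hlt' : AllLt (insert x P) C' := by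
      intro a ha b hb
      rcases Finset.mem_insert.1 ha with rfl | ha
      · exact hxlt b hb
      · exact hlt a ha b (hC'C hb)
    have hinv' : InvS w c (insert x P) C' := by
      intro S hS hSc y z hy hz
      by_cases hxS : x ∈ S
      · have hmemC' : ∀ t : Fin N, (t ∈ C' ∨ (t ∈ insert x P ∧ ∀ s ∈ S, s < t)) → t ∈ C' := by
          intro t ht
          rcases ht with h | ⟨htP, hts⟩
          · exact h
          · exfalso
            have hxt : x < t := hts x hxS
            rcases Finset.mem_insert.1 htP with h' | h'
            · exact absurd (h' ▸ hxt) (lt_irrefl x)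
            · exact absurd (hlt t h' x hxC) (not_lt_of_gt hxt)
        have hyC := hmemC' y hy
        have hzC := hmemC' z hz
        have hST : S ∈ T := by
          rw [hT, Finset.mem_powersetCard]
          exact ⟨hS, hSc⟩
        have hκy : κ y = t₀ := (Finset.mem_filter.1 hyC).2
        have hκz : κ z = t₀ := (Finset.mem_filter.1 hzC).2
        have : κ y ⟨S, hST⟩ = κ z ⟨S, hST⟩ := by rw [hκy, hκz]
        exact this
      · have hSP : S ⊆ P := fun t ht =>
          (Finset.mem_insert.1 (hS ht)).resolve_left (fun h => hxS (h ▸ ht))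
        have conv : ∀ t : Fin N, (t ∈ C' ∨ (t ∈ insert x P ∧ ∀ s ∈ S, s < t)) →
            (t ∈ C ∨ (t ∈ P ∧ ∀ s ∈ S, s < t)) := by
          intro t ht
          rcases ht with h | ⟨htP, hts⟩
          · exact Or.inl (hC'C h)
          · rcases Finset.mem_insert.1 htP with rfl | h
            · exact Or.inl hxC
            · exact Or.inr ⟨h, hts⟩
        exact hinv S hSP hSc y z (conv y hy) (conv z hz)
    have hcard' : beta w (insert x P).card m ≤ C'.card := by
      rw [Finset.card_insert_of_notMem hxP]
      exact hfib
    obtain ⟨X', hX'C', hX'card, hX'inv⟩ := IH (insert x P) C' hlt' hinv' hcard'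
    have hxX' : x ∉ X' := fun h => lt_irrefl x (hxlt x (hX'C' h))
    refine ⟨insert x X', Finset.insert_subset hxC (hX'C'.trans hC'C), ?_, ?_⟩
    · rw [Finset.card_insert_of_notMem hxX']
      omega
    · have heq : P ∪ insert x X' = insert x P ∪ X' := by
        ext t
        constructor
        · intro ht
          rcases Finset.mem_union.1 ht with hP | hX
          · exact Finset.mem_union_left _ (Finset.mem_insert_of_mem hP)
          · rcases Finset.mem_insert.1 hX with h' | h'
            · exact h' ▸ Finset.mem_union_left _ (Finset.mem_insert_self _ _)
            · exact Finset.mem_union_right _ h'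
        · intro ht
          rcases Finset.mem_union.1 ht with hP | hX
          · rcases Finset.mem_insert.1 hP with h' | h'
            · exact h' ▸ Finset.mem_union_right _ (Finset.mem_insert_self _ _)
            · exact Finset.mem_union_left _ h'
          · exact Finset.mem_union_right _ (Finset.mem_insert_of_mem hX)
      rw [heq]
      exact hX'inv

lemma EH {N : ℕ} (w : ℕ) (hw : 1 ≤ w) (c : Finset (Fin N) → Bool) (G : Finset (Fin N)) (M : ℕ)
    (h : beta w 0 M ≤ G.card) : ∃ X ⊆ G, M ≤ X.card ∧ Inv2 w c X := by
  have h0 : AllLt (∅ : Finset (Fin N)) G := by intro a ha; simp at ha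
  have h1 : InvS w c ∅ G := by
    intro S hS hSc
    have : S = ∅ := Finset.subset_empty.1 hS
    rw [this] at hSc
    simp at hSc
    omega
  obtain ⟨X, hX1, hX2, hX3⟩ := EHrec w c M ∅ G h0 h1 (by simpa using h)
  rw [Finset.empty_union] at hX3
  exact ⟨X, hX1, hX2, hX3⟩

open scoped Classical in
lemma inv2_d {N : ℕ} (w : ℕ) (c : Finset (Fin N) → Bool) (X : Finset (Fin N))
    (hX : Inv2 w c X) :
    ∃ d : Finset (Fin N) → Bool, ∀ A ⊆ X, A.card = w + 1 →
      ∀ h : A.Nonempty, c A = d (A.erase (A.max' h)) := by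
  refine ⟨fun S => if h : ((X.filter (fun y => ∀ s ∈ S, s < y)).Nonempty) then
    c (insert ((X.filter (fun y => ∀ s ∈ S, s < y)).min' h) S) else false, ?_⟩
  intro A hA hAc hAne
  set M := A.max' hAne with hM
  set S := A.erase M with hS
  have hSX : S ⊆ X := (Finset.erase_subset _ _).trans hA
  have hSc : S.card = w := by
    rw [hS, Finset.card_erase_of_mem (A.max'_mem hAne), hAc]
    omega
  have hMfil : M ∈ X.filter (fun y => ∀ s ∈ S, s < y) := by
    refine Finset.mem_filter.2 ⟨hA (A.max'_mem hAne), ?_⟩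
    intro s hs
    rcases Finset.mem_erase.1 hs with ⟨hne, hsA⟩
    exact lt_of_le_of_ne (A.le_max' s hsA) hne
  have hne2 : (X.filter (fun y => ∀ s ∈ S, s < y)).Nonempty := ⟨M, hMfil⟩
  show c A = if h : (X.filter (fun y => ∀ s ∈ S, s < y)).Nonempty then
    c (insert ((X.filter (fun y => ∀ s ∈ S, s < y)).min' h) S) else false
  rw [dif_pos hne2]
  set y₀ := (X.filter (fun y => ∀ s ∈ S, s < y)).min' hne2 with hy₀def
  have hy₀ : y₀ ∈ X.filter (fun y => ∀ s ∈ S, s < y) := Finset.min'_mem _ _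
  have h1 : A = insert M S := by rw [hS, hM, Finset.insert_erase (A.max'_mem hAne)]
  rw [h1]
  exact hX S hSX hSc M (hA (A.max'_mem hAne)) y₀ (Finset.mem_of_mem_filter _ hy₀)
    (Finset.mem_filter.1 hMfil).2 (Finset.mem_filter.1 hy₀).2

/-- ground size needed for a monochromatic tight path with `n` vertices, uniformity `j+3`. -/
def rho (n : ℕ) : ℕ → ℕ
  | 0 => 2 ^ (2 * n) + 2
  | j + 1 => beta (j + 3) 0 (rho n j)

lemma PL {N : ℕ} : ∀ (j n : ℕ) (c : Finset (Fin N) → Bool) (G : Finset (Fin N)),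
    rho n j ≤ G.card → ∃ col : Bool, ∃ S : Finset (Fin N), S ⊆ G ∧ n ≤ S.card ∧
      ∀ W ⊆ S, W.card = j + 3 → Consec S W → c W = col := by
  intro j
  induction j with
  | zero => intro n c G h; exact base n c G h
  | succ j IH =>
    intro n c G h
    obtain ⟨X, hXG, hXcard, hXinv⟩ := EH (j + 3) (by omega) c G (rho n j) h
    obtain ⟨d, hd⟩ := inv2_d (j + 3) c X hXinv
    obtain ⟨col, S, hSX, hScard, hSwin⟩ := IH n d X hXcard
    refine ⟨col, S, hSX.trans hXG, hScard, ?_⟩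
    intro W hW hWc hWcon
    have hWne : W.Nonempty := Finset.card_pos.1 (by omega)
    have hWX : W ⊆ X := hW.trans hSX
    rw [hd W hWX (by omega) hWne]
    apply hSwin
    · exact (Finset.erase_subset _ _).trans hW
    · rw [Finset.card_erase_of_mem (W.max'_mem hWne), hWc]
      omega
    · exact consec_erase_max hWcon hWne


lemma twr_succ (i x : ℕ) (hi : 1 ≤ i) : twr (i + 1) x = 2 ^ twr i x := by
  match i, hi with
  | j + 1, _ => rfl

lemma twr_pos (i x : ℕ) (hx : 1 ≤ x) : 1 ≤ twr i x := by
  match i with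
  | 0 => exact hx
  | 1 => exact hx
  | j + 2 => exact Nat.one_le_two_pow

lemma twr_mono (i : ℕ) : ∀ x y : ℕ, x ≤ y → twr i x ≤ twr i y := by
  induction i with
  | zero => exact fun x y h => h
  | succ j ih =>
    match j with
    | 0 => exact fun x y h => h
    | j' + 1 =>
      intro x y h
      exact Nat.pow_le_pow_right (by norm_num) (ih x y h)

lemma le_two_pow_pred : ∀ m : ℕ, m ≤ 2 ^ (m - 1) := by
  intro m
  match m with
  | 0 => norm_num
  | m + 1 =>
    have := @Nat.lt_two_pow_self m
    simpa using this

lemma mul_two_pow_le (m t : ℕ) (ht : 1 ≤ t) : m * 2 ^ t ≤ 2 ^ (m * t) := by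
  match m with
  | 0 => simp
  | m + 1 =>
    have h1 : m + 1 ≤ 2 ^ (m * t) := by
      calc m + 1 ≤ 2 ^ m := le_two_pow_pred (m + 1)
        _ ≤ 2 ^ (m * t) := Nat.pow_le_pow_right (by norm_num) (Nat.le_mul_of_pos_right m ht)
    calc (m + 1) * 2 ^ t ≤ 2 ^ (m * t) * 2 ^ t := Nat.mul_le_mul_right _ h1
      _ = 2 ^ ((m + 1) * t) := by rw [← pow_add, Nat.succ_mul]

lemma twr_mul_le (i : ℕ) (hi : 1 ≤ i) (m x : ℕ) (hx : 1 ≤ x) :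
    m * twr i x ≤ twr i (m * x) := by
  induction i, hi using Nat.le_induction with
  | base => exact le_refl _
  | succ i hi ih =>
    rw [twr_succ i x hi, twr_succ i (m * x) hi]
    have ht : 1 ≤ twr i x := twr_pos i x hx
    calc m * 2 ^ twr i x ≤ 2 ^ (m * twr i x) := mul_two_pow_le m _ ht
      _ ≤ 2 ^ twr i (m * x) := Nat.pow_le_pow_right (by norm_num) ih

lemma succ_pow_ge (w : ℕ) (hw : 1 ≤ w) (y : ℕ) : y ^ w + 1 ≤ (y + 1) ^ w := by
  induction w, hw using Nat.le_induction with
  | base => simp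
  | succ w hw ih =>
    have h1 : (y + 1) ^ (w + 1) = (y + 1) ^ w * y + (y + 1) ^ w := by ring
    have h2 : (y ^ w + 1) * y ≤ (y + 1) ^ w * y := Nat.mul_le_mul_right y ih
    have h3 : (y ^ w + 1) * y = y ^ (w + 1) + y := by ring
    have h4 : 1 ≤ (y + 1) ^ w := Nat.one_le_pow _ _ (by omega)
    omega

lemma pow_key (w p a : ℕ) (hw : 1 ≤ w) (hpa : p + 1 ≤ a) :
    (p + 1) ^ w + a ^ (w + 1) + 1 ≤ (a + 1) ^ (w + 1) := by
  have e1 : (a + 1) ^ (w + 1) = (a + 1) ^ w * a + (a + 1) ^ w := by ring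
  have e2 : a ^ (w + 1) = a ^ w * a := by ring
  have e3 : a ^ w * a ≤ (a + 1) ^ w * a := Nat.mul_le_mul_right a (Nat.pow_le_pow_left (by omega) w)
  have e4 : (p + 2) ^ w ≤ (a + 1) ^ w := Nat.pow_le_pow_left (by omega) w
  have e5 : (p + 1) ^ w + 1 ≤ (p + 2) ^ w := succ_pow_ge w hw (p + 1)
  omega

lemma beta_le (w : ℕ) (hw : 1 ≤ w) : ∀ (m p : ℕ), beta w p m ≤ 2 ^ ((p + 2 * m + 1) ^ (w + 1)) := by
  intro m
  induction m with
  | zero => intro p; show 0 ≤ _; exact Nat.zero_le _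
  | succ m ih =>
    intro p
    have h1 := ih (p + 1)
    have hE : (p + 1) ^ w + ((p + 1) + 2 * m + 1) ^ (w + 1) + 1 ≤ (p + 2 * (m + 1) + 1) ^ (w + 1) := by
      have ha : (p + 1) + 2 * m + 1 = p + 2 * m + 2 := by omega
      have hb : p + 2 * (m + 1) + 1 = (p + 2 * m + 2) + 1 := by omega
      rw [ha, hb]
      exact pow_key w p (p + 2 * m + 2) hw (by omega)
    calc beta w p (m + 1) = 1 + 2 ^ ((p + 1) ^ w) * beta w (p + 1) m := rfl
      _ ≤ 1 + 2 ^ ((p + 1) ^ w) * 2 ^ (((p + 1) + 2 * m + 1) ^ (w + 1)) :=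
          Nat.add_le_add_left (Nat.mul_le_mul_left _ h1) 1
      _ = 1 + 2 ^ ((p + 1) ^ w + ((p + 1) + 2 * m + 1) ^ (w + 1)) := by rw [← pow_add]
      _ ≤ 2 ^ ((p + 1) ^ w + ((p + 1) + 2 * m + 1) ^ (w + 1)) +
          2 ^ ((p + 1) ^ w + ((p + 1) + 2 * m + 1) ^ (w + 1)) := by
            have : 1 ≤ 2 ^ ((p + 1) ^ w + ((p + 1) + 2 * m + 1) ^ (w + 1)) := Nat.one_le_two_pow
            omega
      _ = 2 ^ ((p + 1) ^ w + ((p + 1) + 2 * m + 1) ^ (w + 1) + 1) := by rw [pow_succ]; ring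
      _ ≤ 2 ^ ((p + 2 * (m + 1) + 1) ^ (w + 1)) := Nat.pow_le_pow_right (by norm_num) (by omega)

lemma rho_le : ∀ j : ℕ, ∃ D : ℕ, 1 ≤ D ∧ ∀ n : ℕ, 1 ≤ n → rho n j ≤ twr (j + 2) (D * n) := by
  intro j
  induction j with
  | zero =>
    refine ⟨4, by norm_num, ?_⟩
    intro n hn
    show 2 ^ (2 * n) + 2 ≤ twr 2 (4 * n)
    have ht : twr 2 (4 * n) = 2 ^ (4 * n) := rfl
    rw [ht]
    have h1 : 2 ≤ 2 ^ (2 * n) := by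
      calc (2:ℕ) = 2 ^ 1 := rfl
        _ ≤ 2 ^ (2 * n) := Nat.pow_le_pow_right (by norm_num) (by omega)
    have h2 : 2 ^ (2 * n) + 2 ^ (2 * n) = 2 ^ (2 * n + 1) := by rw [pow_succ]; ring
    have h3 : 2 ^ (2 * n + 1) ≤ 2 ^ (4 * n) := Nat.pow_le_pow_right (by norm_num) (by omega)
    omega
  | succ j IH =>
    obtain ⟨D, hD1, hD⟩ := IH
    refine ⟨3 * (j + 4) * D, Nat.mul_pos (by omega) hD1, ?_⟩
    intro n hn
    have hR := hD n hn
    set R := rho n j with hRdef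
    have hDn : 1 ≤ D * n := Nat.mul_pos hD1 hn
    set t := twr (j + 1) (D * n) with htdef
    have ht1 : 1 ≤ t := twr_pos _ _ hDn
    have htw : twr (j + 2) (D * n) = 2 ^ t := twr_succ (j + 1) (D * n) (by omega)
    -- step 1 : rho n (j+1) ≤ 2 ^ ((2R+1)^(j+4))
    have hstep1 : rho n (j + 1) ≤ 2 ^ ((0 + 2 * R + 1) ^ (j + 4)) := by
      show beta (j + 3) 0 R ≤ _
      exact beta_le (j + 3) (by omega) R 0
    have hstep1' : rho n (j + 1) ≤ 2 ^ ((2 * R + 1) ^ (j + 4)) := by simpa using hstep1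
    -- step 2 : 2R + 1 ≤ 2 ^ (t + 2)
    have hstep2 : 2 * R + 1 ≤ 2 ^ (t + 2) := by
      have : R ≤ 2 ^ t := htw ▸ hR
      have h2 : 2 ^ (t + 2) = 4 * 2 ^ t := by rw [pow_add]; ring
      have h3 : 1 ≤ 2 ^ t := Nat.one_le_two_pow
      omega
    -- step 3 : (2R+1)^(j+4) ≤ 2 ^ ((t+2)*(j+4)) ≤ 2 ^ (3*(j+4)*t)
    have hstep3 : (2 * R + 1) ^ (j + 4) ≤ 2 ^ (3 * (j + 4) * t) := by
      calc (2 * R + 1) ^ (j + 4) ≤ (2 ^ (t + 2)) ^ (j + 4) := Nat.pow_le_pow_left hstep2 _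
        _ = 2 ^ ((t + 2) * (j + 4)) := by rw [← pow_mul]
        _ ≤ 2 ^ (3 * (j + 4) * t) := Nat.pow_le_pow_right (by norm_num) (by nlinarith)
    -- step 4 : 3*(j+4)*t ≤ twr (j+1) (3*(j+4)*D*n)
    have hstep4 : 3 * (j + 4) * t ≤ twr (j + 1) (3 * (j + 4) * D * n) := by
      have := twr_mul_le (j + 1) (by omega) (3 * (j + 4)) (D * n) hDn
      calc 3 * (j + 4) * t = (3 * (j + 4)) * twr (j + 1) (D * n) := by rw [htdef]
        _ ≤ twr (j + 1) ((3 * (j + 4)) * (D * n)) := this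
        _ = twr (j + 1) (3 * (j + 4) * D * n) := by ring_nf
    -- assemble
    have hfin : twr (j + 1 + 2) (3 * (j + 4) * D * n) =
        2 ^ 2 ^ twr (j + 1) (3 * (j + 4) * D * n) := by
      rw [twr_succ (j + 2) _ (by omega), twr_succ (j + 1) _ (by omega)]
    rw [hfin]
    calc rho n (j + 1) ≤ 2 ^ ((2 * R + 1) ^ (j + 4)) := hstep1'
      _ ≤ 2 ^ 2 ^ (3 * (j + 4) * t) :=
          Nat.pow_le_pow_right (by norm_num) hstep3
      _ ≤ 2 ^ 2 ^ twr (j + 1) (3 * (j + 4) * D * n) :=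
          Nat.pow_le_pow_right (by norm_num)
            (Nat.pow_le_pow_right (by norm_num) hstep4)

end Stmt10

/-- **Theorem 1.4 (upper bound)**: for every fixed `k ≥ 3` there is a constant `C` such that
for all `n ≥ 1`, every transitive 2-coloring of the `(k+1)`-element subsets of
`{1, …, twr_k(C·n)}` admits an `n`-element homogeneous subset;
i.e. `trrams_{k+1}(n) ≤ twr_k(O(n))`. -/
theorem stmt10 (k : ℕ) (hk : 3 ≤ k) :
    ∃ C : ℕ, 0 < C ∧ ∀ n : ℕ, 1 ≤ n →
      ∀ c : Finset (Fin (twr k (C * n))) → Bool,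
        IsTransitive (k + 1) c → HasHomog (k + 1) n c := by
  obtain ⟨D, hD1, hD⟩ := Stmt10.rho_le (k - 2)
  refine ⟨D, hD1, ?_⟩
  intro n hn c hc
  have hk2 : k - 2 + 2 = k := by omega
  have hG : Stmt10.rho n (k - 2) ≤ (Finset.univ : Finset (Fin (twr k (D * n)))).card := by
    rw [Finset.card_univ, Fintype.card_fin]
    have h1 := hD n hn
    rwa [hk2] at h1
  obtain ⟨col, S, _, hScard, hSwin⟩ := Stmt10.PL (k - 2) n c Finset.univ hG
  have hwin' : ∀ W ⊆ S, W.card = k + 1 → Stmt10.Consec S W → c W = col := by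
    intro W h1 h2 h3
    exact hSwin W h1 (by omega) h3
  have hhom := Stmt10.lemA (ℓ := k + 1) (by omega) hc col S hwin'
  obtain ⟨S', hS'S, hS'card⟩ := Finset.exists_subset_card_eq hScard
  exact ⟨S', hS'card, col, fun T hT hTc => hhom T (hT.trans hS'S) hTc⟩
end

section
/- If every transitive 2-coloring of the (k+1)-element subsets of {1, …, N} admits an n-element homogeneous subset, then every set of N points in the plane in k-general position contains an n-point kth-order monotone subset (that is, ES_k(n) ≤ trrams_{k+1}(n)). -/
open Finset

lemma erase_succAbove (m : ℕ) (c : Fin (m+2)) (i : Fin (m+1)) :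
    (univ : Finset (Fin (m+2))).erase (c.succAbove i)
      = insert c (((univ : Finset (Fin (m+1))).erase i).image c.succAbove) := by
  ext b
  simp only [mem_erase, mem_univ, and_true, mem_insert, mem_image]
  constructor
  · intro hb
    by_cases hbc : b = c
    · exact Or.inl hbc
    · obtain ⟨j, hj⟩ := Fin.exists_succAbove_eq hbc
      refine Or.inr ⟨j, ?_, hj⟩
      intro hji
      exact hb (by rw [← hj, hji])
  · intro hb
    rcases hb with hbc | ⟨j, hji, hjb⟩
    · subst hbc
      exact (Fin.succAbove_ne _ i).symm
    · subst hjb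
      exact fun hEq => hji (Fin.succAbove_right_injective hEq)

lemma prod_erase_succAbove (m : ℕ) (c : Fin (m+2)) (i : Fin (m+1)) (g : Fin (m+2) → ℝ) :
    ∏ j ∈ (univ : Finset (Fin (m+2))).erase (c.succAbove i), g j
      = g c * ∏ j ∈ (univ : Finset (Fin (m+1))).erase i, g (c.succAbove j) := by
  rw [erase_succAbove, prod_insert, prod_image]
  · exact fun a _ b _ hab => Fin.succAbove_right_injective hab
  · simp only [mem_image, not_exists]
    intro j
    rintro ⟨-, hj⟩
    exact Fin.succAbove_ne c j hj

lemma sum_succAbove_eq (m : ℕ) (p : Fin (m+2) → ℝ × ℝ)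
    (hinj : Function.Injective fun i => (p i).1) (c : Fin (m+2)) :
    (∑ i : Fin (m+1), (p (c.succAbove i)).2 /
        ∏ j ∈ (univ : Finset (Fin (m+1))).erase i, ((p (c.succAbove i)).1 - (p (c.succAbove j)).1))
      = ∑ t : Fin (m+2), (p t).2 * ((p t).1 - (p c).1) /
          ∏ j ∈ (univ : Finset (Fin (m+2))).erase t, ((p t).1 - (p j).1) := by
  rw [Fin.sum_univ_succAbove
    (fun t => (p t).2 * ((p t).1 - (p c).1) /
      ∏ j ∈ (univ : Finset (Fin (m+2))).erase t, ((p t).1 - (p j).1)) c]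
  rw [show (p c).2 * ((p c).1 - (p c).1) /
      ∏ j ∈ (univ : Finset (Fin (m+2))).erase c, ((p c).1 - (p j).1) = 0 by simp, zero_add]
  refine Finset.sum_congr rfl fun i _ => ?_
  rw [prod_erase_succAbove m c i (fun j => (p (c.succAbove i)).1 - (p j).1)]
  have hne : (p (c.succAbove i)).1 - (p c).1 ≠ 0 :=
    sub_ne_zero.mpr (fun hEq => Fin.succAbove_ne c i (hinj hEq))
  rw [mul_comm ((p (c.succAbove i)).2) _, mul_div_mul_left _ _ hne]

lemma divdiff_eq_sum : ∀ (m : ℕ) (p : Fin (m+1) → ℝ × ℝ),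
    (Function.Injective fun i => (p i).1) →
    divdiff m p = ∑ i, (p i).2 / ∏ j ∈ (univ : Finset (Fin (m+1))).erase i, ((p i).1 - (p j).1)
  | 0, p, _ => by simp [divdiff]
  | (m+1), p, hinj => by
    have hsucc : Function.Injective fun i : Fin (m+1) => (p i.succ).1 :=
      fun a b hab => Fin.succ_injective _ (hinj hab)
    have hcast : Function.Injective fun i : Fin (m+1) => (p i.castSucc).1 :=
      fun a b hab => Fin.castSucc_injective _ (hinj hab)
    have hstep : divdiff (m+1) p =
        (divdiff m (fun i => p i.succ) - divdiff m (fun i => p i.castSucc)) /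
          ((p (Fin.last (m + 1))).1 - (p 0).1) := rfl
    rw [hstep, divdiff_eq_sum m _ hsucc, divdiff_eq_sum m _ hcast]
    have e1 : (∑ i : Fin (m+1), (p i.succ).2 /
          ∏ j ∈ (univ : Finset (Fin (m+1))).erase i, ((p i.succ).1 - (p j.succ).1))
        = ∑ t : Fin (m+2), (p t).2 * ((p t).1 - (p 0).1) /
            ∏ j ∈ (univ : Finset (Fin (m+2))).erase t, ((p t).1 - (p j).1) := by
      have := sum_succAbove_eq m p hinj 0
      simpa [Fin.succAbove_zero] using this
    have e2 : (∑ i : Fin (m+1), (p i.castSucc).2 /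
          ∏ j ∈ (univ : Finset (Fin (m+1))).erase i, ((p i.castSucc).1 - (p j.castSucc).1))
        = ∑ t : Fin (m+2), (p t).2 * ((p t).1 - (p (Fin.last (m+1))).1) /
            ∏ j ∈ (univ : Finset (Fin (m+2))).erase t, ((p t).1 - (p j).1) := by
      have := sum_succAbove_eq m p hinj (Fin.last (m+1))
      simpa [Fin.succAbove_last] using this
    rw [e1, e2]
    have hne : (p (Fin.last (m+1))).1 - (p 0).1 ≠ 0 := by
      refine sub_ne_zero.mpr fun hEq => ?_
      have := hinj hEq
      simp [Fin.ext_iff] at this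
    rw [div_eq_iff hne, Finset.sum_mul, ← Finset.sum_sub_distrib]
    refine Finset.sum_congr rfl fun t _ => ?_
    ring

lemma divdiff_succAbove_sub (m : ℕ) (p : Fin (m+2) → ℝ × ℝ)
    (hinj : Function.Injective fun i => (p i).1) (a b : Fin (m+2)) :
    divdiff m (fun i => p (a.succAbove i)) - divdiff m (fun i => p (b.succAbove i))
      = ((p b).1 - (p a).1) * divdiff (m+1) p := by
  have ha : Function.Injective fun i : Fin (m+1) => (p (a.succAbove i)).1 :=
    fun i j hij => Fin.succAbove_right_injective (hinj hij)
  have hb : Function.Injective fun i : Fin (m+1) => (p (b.succAbove i)).1 :=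
    fun i j hij => Fin.succAbove_right_injective (hinj hij)
  rw [divdiff_eq_sum m _ ha, divdiff_eq_sum m _ hb,
      divdiff_eq_sum (m+1) p hinj]
  rw [sum_succAbove_eq m p hinj a, sum_succAbove_eq m p hinj b,
      Finset.mul_sum, ← Finset.sum_sub_distrib]
  refine Finset.sum_congr rfl fun t _ => ?_
  ring

lemma divdiff_sign_between (m : ℕ) (p : Fin (m+2) → ℝ × ℝ)
    (hx : StrictMono fun i => (p i).1) (j : Fin (m+2))
    (hiff : (0 ≤ divdiff m (fun i => p ((0 : Fin (m+2)).succAbove i)) ↔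
        0 ≤ divdiff m (fun i => p ((Fin.last (m+1)).succAbove i)))) :
    (0 ≤ divdiff m (fun i => p (j.succAbove i)) ↔
        0 ≤ divdiff m (fun i => p ((0 : Fin (m+2)).succAbove i))) := by
  have hinj : Function.Injective fun i => (p i).1 := hx.injective
  set D0 := divdiff m (fun i => p ((0 : Fin (m+2)).succAbove i)) with hD0
  set DL := divdiff m (fun i => p ((Fin.last (m+1)).succAbove i)) with hDL
  set Dj := divdiff m (fun i => p (j.succAbove i)) with hDj
  set Δ := divdiff (m+1) p with hΔ
  have h1 : D0 - Dj = ((p j).1 - (p 0).1) * Δ := divdiff_succAbove_sub m p hinj 0 j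
  have h2 : Dj - DL = ((p (Fin.last (m+1))).1 - (p j).1) * Δ :=
    divdiff_succAbove_sub m p hinj j (Fin.last (m+1))
  have hj0 : 0 ≤ (p j).1 - (p 0).1 := by
    have := hx.monotone (Fin.zero_le j)
    simpa using this
  have hjL : 0 ≤ (p (Fin.last (m+1))).1 - (p j).1 := by
    have := hx.monotone (Fin.le_last j)
    simpa using this
  rcases le_total 0 Δ with hd | hd
  · have t1 : 0 ≤ ((p j).1 - (p 0).1) * Δ := mul_nonneg hj0 hd
    have t2 : 0 ≤ ((p (Fin.last (m+1))).1 - (p j).1) * Δ := mul_nonneg hjL hd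
    constructor
    · intro hDjpos; linarith
    · intro hD0pos
      have := hiff.mp hD0pos
      linarith
  · have t1 : ((p j).1 - (p 0).1) * Δ ≤ 0 := mul_nonpos_of_nonneg_of_nonpos hj0 hd
    have t2 : ((p (Fin.last (m+1))).1 - (p j).1) * Δ ≤ 0 := mul_nonpos_of_nonneg_of_nonpos hjL hd
    constructor
    · intro hDjpos
      have : 0 ≤ DL := by linarith
      exact hiff.mpr this
    · intro hD0pos; linarith

noncomputable def EScolor (k N : ℕ) (f : Fin N → ℝ × ℝ) : Finset (Fin N) → Bool := fun T =>
  if hT : T.card = k + 1 then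
    decide (0 ≤ divdiff k (fun j => f (T.orderEmbOfFin hT j)))
  else true

lemma EScolor_eq (k N : ℕ) (f : Fin N → ℝ × ℝ) (T : Finset (Fin N)) (hT : T.card = k + 1) :
    EScolor k N f T = decide (0 ≤ divdiff k (fun j => f (T.orderEmbOfFin hT j))) := by
  simp only [EScolor, dif_pos hT]

lemma erase_orderEmbOfFin {N m : ℕ} (T : Finset (Fin N)) (hT : T.card = m + 2) (j : Fin (m+2))
    (hc : (T.erase (T.orderEmbOfFin hT j)).card = m + 1) :
    ⇑((T.erase (T.orderEmbOfFin hT j)).orderEmbOfFin hc)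
      = fun i => T.orderEmbOfFin hT (j.succAbove i) := by
  refine (Finset.orderEmbOfFin_unique hc ?_ ?_).symm
  · intro i
    rw [Finset.mem_erase]
    exact ⟨fun hEq => Fin.succAbove_ne j i ((T.orderEmbOfFin hT).injective hEq),
      Finset.orderEmbOfFin_mem T hT _⟩
  · intro i i' hii
    exact (T.orderEmbOfFin hT).strictMono (Fin.strictMono_succAbove j hii)

lemma EScolor_transitive (k N : ℕ) (f : Fin N → ℝ × ℝ)
    (hfmono : StrictMono fun i => (f i).1) :
    IsTransitive (k + 1) (EScolor k N f) := by
  intro T hTcard hne hends a haT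
  set e := T.orderEmbOfFin hTcard with he
  have hqmono : StrictMono fun i : Fin (k+2) => (f (e i)).1 :=
    fun i j hij => hfmono (e.strictMono hij)
  -- value of the coloring on one-point erasures
  have hcval : ∀ j : Fin (k+2),
      EScolor k N f (T.erase (e j)) =
        decide (0 ≤ divdiff k (fun i => f (e (j.succAbove i)))) := by
    intro j
    have hmem : e j ∈ T := Finset.orderEmbOfFin_mem T hTcard j
    have hc : (T.erase (e j)).card = k + 1 := by
      rw [Finset.card_erase_of_mem hmem, hTcard]
      omega
    rw [EScolor_eq k N f _ hc]
    congr 1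
    rw [erase_orderEmbOfFin T hTcard j hc]
  -- identify min' and max'
  have hmin : T.min' hne = e 0 := by
    have := Finset.orderEmbOfFin_zero hTcard (by omega : 0 < k + 2)
    rw [he]
    rw [show (0 : Fin (k+2)) = ⟨0, by omega⟩ from rfl, this]
  have hmax : T.max' hne = e (Fin.last (k+1)) := by
    have := Finset.orderEmbOfFin_last hTcard (by omega : 0 < k + 2)
    rw [he]
    rw [show (Fin.last (k+1)) = (⟨k + 2 - 1, by omega⟩ : Fin (k+2)) from rfl, this]
  obtain ⟨j, hj⟩ : ∃ j : Fin (k+2), e j = a := by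
    have : a ∈ Set.range ⇑e := by
      rw [he, Finset.range_orderEmbOfFin]
      exact haT
    exact this
  rw [hmin, hmax, hcval, hcval] at hends
  rw [hmin, ← hj, hcval, hcval]
  rw [decide_eq_decide] at hends ⊢
  have h0 : (fun i : Fin (k+1) => f (e ((0 : Fin (k+2)).succAbove i)))
      = fun i => (fun t : Fin (k+2) => f (e t)) ((0 : Fin (k+2)).succAbove i) := rfl
  exact divdiff_sign_between k (fun t => f (e t)) hqmono j hends.symm

/-- **`ES_k(n) ≤ trrams_{k+1}(n)`** (the easy inequality in Theorem 1.4): if every transitive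
2-coloring of the `(k+1)`-element subsets of `{1, …, N}` admits an `n`-element homogeneous
subset, then every set of `N` points in the plane in `k`-general position contains an
`n`-point `k`-th order monotone subset. -/
theorem stmt11 (k N n : ℕ)
    (h : ∀ c : Finset (Fin N) → Bool, IsTransitive (k + 1) c → HasHomog (k + 1) n c) :
    ∀ P : Finset (ℝ × ℝ), P.card = N → KGenPos k P →
      ∃ S ⊆ P, S.card = n ∧ KOrderMonotone k S := by
  classical
  intro P hPcard hgen
  obtain ⟨hx1, -⟩ := hgen
  have hXcard : (P.image Prod.fst).card = N := by
    rw [Finset.card_image_of_injOn, hPcard]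
    intro p hp q hq hpq
    exact hx1 p hp q hq hpq
  have hex : ∀ i : Fin N, ∃! q, q ∈ P ∧ q.1 = (P.image Prod.fst).orderEmbOfFin hXcard i := by
    intro i
    have hmem := Finset.orderEmbOfFin_mem (P.image Prod.fst) hXcard i
    rw [Finset.mem_image] at hmem
    obtain ⟨q, hq, hq2⟩ := hmem
    exact ⟨q, ⟨hq, hq2⟩, fun r ⟨hr, hr2⟩ => hx1 r hr q hq (by rw [hr2, hq2])⟩
  set f : Fin N → ℝ × ℝ := fun i => P.choose _ (hex i) with hf
  have hfP : ∀ i, f i ∈ P := fun i => (P.choose_spec _ (hex i)).1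
  have hfx : ∀ i, (f i).1 = (P.image Prod.fst).orderEmbOfFin hXcard i :=
    fun i => (P.choose_spec _ (hex i)).2
  have hfmono : StrictMono fun i => (f i).1 := by
    intro i j hij
    simp only [hfx]
    exact ((P.image Prod.fst).orderEmbOfFin hXcard).strictMono hij
  have hfinj : Function.Injective f := fun i j hij =>
    hfmono.injective (show (f i).1 = (f j).1 by rw [hij])
  obtain ⟨S₀, hS₀card, col, hcol⟩ := h (EScolor k N f) (EScolor_transitive k N f hfmono)
  refine ⟨S₀.image f, ?_, ?_, ?_⟩
  · intro p hp
    rw [Finset.mem_image] at hp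
    obtain ⟨i, -, rfl⟩ := hp
    exact hfP i
  · rw [Finset.card_image_of_injective _ hfinj, hS₀card]
  · have key : ∀ qq : Fin (k+1) → ℝ × ℝ, (∀ i, qq i ∈ S₀.image f) →
        StrictMono (fun i => (qq i).1) → decide (0 ≤ divdiff k qq) = col := by
      intro qq hqm hqmono
      choose t ht hft using fun i => Finset.mem_image.mp (hqm i)
      have htmono : StrictMono t := by
        intro i j hij
        have hxy : (qq i).1 < (qq j).1 := hqmono hij
        rw [← hft i, ← hft j] at hxy
        exact hfmono.lt_iff_lt.mp hxy
      have hTsub : Finset.image t Finset.univ ⊆ S₀ := by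
        intro b hb
        rw [Finset.mem_image] at hb
        obtain ⟨i, -, rfl⟩ := hb
        exact ht i
      have hTcard : (Finset.image t Finset.univ).card = k + 1 := by
        rw [Finset.card_image_of_injective _ htmono.injective, Finset.card_univ, Fintype.card_fin]
      rw [← hcol _ hTsub hTcard, EScolor_eq k N f _ hTcard]
      have ht_eq : t = ⇑((Finset.image t Finset.univ).orderEmbOfFin hTcard) :=
        Finset.orderEmbOfFin_unique hTcard
          (fun i => Finset.mem_image_of_mem t (Finset.mem_univ i)) htmono
      have hq_eq : qq = fun j => f (((Finset.image t Finset.univ).orderEmbOfFin hTcard) j) := by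
        funext j
        rw [← ht_eq]
        exact (hft j).symm
      rw [← hq_eq]
    rcases col with - | -
    · right
      intro qq h1 h2
      have := key qq h1 h2
      rw [decide_eq_false_iff_not] at this
      push_neg at this
      linarith
    · left
      intro qq h1 h2
      have := key qq h1 h2
      rwa [decide_eq_true_iff] at this
end
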